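/- arXiv:1411.6109 — 5 statements merged into one kernel-verified Lean document; each statement's English description precedes it below -/
import Mathlib

section
/- Let m ≥ 2, let λ_i > 0 and γ_i ∈ {−1, +1} for i ∈ {1,…,m}, and let K = (K_{ij}) be a symmetric m × m real matrix with nonnegative entries such that, for some index k, K_{kj} > 0 for every j ≠ k. Then there exist real coefficients θ_i^j (i ≠ k, j ∈ {1,…,m}), depending only on λ, γ and K, such that: whenever real numbers (u_i) and (v_i) satisfy the transmission relations γ_i λ_i v_i = Σ_{j=1}^m K_{ij}(u_j − u_i) for every i ∈ {1,…,m}, one has u_j = u_k + Σ_{i≠k} θ_i^j v_i for every j ∈ {1,…,m}. -/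
open Finset

/-- **Traces of the density in terms of the fluxes at a node.**
Let `m ≥ 2`, `λ_i > 0`, `γ_i ∈ {-1, +1}`, and let `K` be a symmetric `m × m` matrix
with nonnegative entries such that for some index `k` one has `K k j > 0` for all
`j ≠ k`.  Then there are coefficients `θ i j` (for `i ≠ k`, `j ∈ {1,…,m}`), depending
only on `λ`, `γ` and `K`, such that whenever `(u_i)` and `(v_i)` satisfy the
transmission relations `γ_i λ_i v_i = ∑_j K_{ij} (u_j - u_i)` for every `i`, one has
`u_j = u_k + ∑_{i ≠ k} θ i j * v_i` for every `j`. -/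
theorem traces_as_linear_combination_of_fluxes
    {m : ℕ} (hm : 2 ≤ m)
    (lam : Fin m → ℝ) (hlam : ∀ i, 0 < lam i)
    (γ : Fin m → ℝ) (hγ : ∀ i, γ i = 1 ∨ γ i = -1)
    (K : Fin m → Fin m → ℝ)
    (hKsym : ∀ i j, K i j = K j i) (hKnn : ∀ i j, 0 ≤ K i j)
    (k : Fin m) (hk : ∀ j, j ≠ k → 0 < K k j) :
    ∃ θ : {i : Fin m // i ≠ k} → Fin m → ℝ,
      ∀ u v : Fin m → ℝ,
        (∀ i, γ i * lam i * v i = ∑ j, K i j * (u j - u i)) →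
        ∀ j, u j = u k + ∑ i : {i : Fin m // i ≠ k}, θ i j * v i := by
  classical
  set S := {i : Fin m // i ≠ k}
  -- The coefficient matrix of the reduced system.
  set A : Matrix S S ℝ :=
    fun i j => K i.1 j.1 - if i = j then ∑ l, K i.1 l else 0 with hA
  -- sum over the subtype equals sum over `univ.erase k`
  have hsub : ∀ f : Fin m → ℝ, ∑ j : S, f j.1 = ∑ j ∈ Finset.univ.erase k, f j := by
    intro f
    exact (Finset.sum_subtype _ (fun x => by simp [Finset.mem_erase]) f).symm
  -- strict row diagonal dominance
  have hdet : A.det ≠ 0 := by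
    apply det_ne_zero_of_sum_row_lt_diag
    intro i
    have hKik : 0 < K i.1 k := by rw [hKsym]; exact hk i.1 i.2
    have hAii : A i i = -(∑ l, K i.1 l - K i.1 i.1) := by
      simp [hA]
    have hdiag : ‖A i i‖ = ∑ l, K i.1 l - K i.1 i.1 := by
      rw [hAii, norm_neg, Real.norm_of_nonneg]
      have := Finset.single_le_sum (f := fun l => K i.1 l)
        (fun l _ => hKnn i.1 l) (Finset.mem_univ i.1)
      linarith
    have hoff : ∀ j ∈ (Finset.univ : Finset S).erase i, ‖A i j‖ = K i.1 j.1 := by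
      intro j hj
      have hij : i ≠ j := (Finset.ne_of_mem_erase hj).symm
      simp [hA, if_neg hij, Real.norm_of_nonneg (hKnn i.1 j.1)]
    rw [hdiag, Finset.sum_congr rfl hoff,
      Finset.sum_erase_eq_sub (Finset.mem_univ i)]
    have h1 : ∑ j : S, K i.1 j.1 = (∑ j, K i.1 j) - K i.1 k := by
      rw [hsub (fun j => K i.1 j), Finset.sum_erase_eq_sub (Finset.mem_univ k)]
    rw [h1]
    linarith
  -- the coefficients
    -- θ i j = (A⁻¹) j i * γ i * lam i  for j ≠ k, else 0
  refine ⟨fun i j => if hj : j = k then 0 else A⁻¹ ⟨j, hj⟩ i * (γ i.1 * lam i.1),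
    ?_⟩
  intro u v hrel
  set w : S → ℝ := fun j => u j.1 - u k with hw
  set b : S → ℝ := fun i => γ i.1 * lam i.1 * v i.1 with hb
  have hmul : A.mulVec w = b := by
    funext i
    have key := hrel i.1
    have hsplit : ∀ j : Fin m, K i.1 j * (u j - u i.1)
        = K i.1 j * (u j - u k) - K i.1 j * (u i.1 - u k) := by
      intro j; ring
    have hS1 : ∑ j : Fin m, K i.1 j * (u j - u k) = ∑ j : S, K i.1 j.1 * w j := by
      rw [hsub (fun j => K i.1 j * (u j - u k)),
        Finset.sum_erase_eq_sub (Finset.mem_univ k)]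
      simp [hw]
    have key2 : γ i.1 * lam i.1 * v i.1
        = (∑ j : S, K i.1 j.1 * w j) - (∑ j, K i.1 j) * w i := by
      rw [key, Finset.sum_congr rfl (fun j _ => hsplit j), Finset.sum_sub_distrib,
        hS1, ← Finset.sum_mul]
    have : A.mulVec w i = (∑ j : S, K i.1 j.1 * w j) - (∑ j, K i.1 j) * w i := by
      simp only [Matrix.mulVec, dotProduct, hA, sub_mul, ite_mul, zero_mul,
        Finset.sum_sub_distrib, Finset.sum_ite_eq, Finset.mem_univ, if_true]
      rw [Fintype.sum_eq_single i (fun x hx => if_neg (Ne.symm hx)), if_pos rfl]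
    rw [this, ← key2]
  have hwB : w = A⁻¹.mulVec b := by
    rw [← hmul, Matrix.mulVec_mulVec, Matrix.nonsing_inv_mul A (isUnit_iff_ne_zero.mpr hdet), Matrix.one_mulVec]
  intro j
  by_cases hj : j = k
  · subst hj; simp
  · have h1 : u j - u k = ∑ i : S, A⁻¹ ⟨j, hj⟩ i * b i := by
      have := congrFun hwB ⟨j, hj⟩
      simpa [Matrix.mulVec, dotProduct, hw] using this
    have h2 : ∑ i : S, A⁻¹ ⟨j, hj⟩ i * b i
        = ∑ i : S, A⁻¹ ⟨j, hj⟩ i * (γ i.1 * lam i.1) * v i.1 :=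
      Finset.sum_congr rfl fun i _ => by simp only [hb]; ring
    simp only [dif_neg hj]
    linarith [h1, h2]
end

section
/- Consider a star network with a single node N and m arcs, arc I_i a compact interval joining the outer vertex a_i to N (incoming if I_i = [a_i, N], outgoing if I_i = [N, a_i]). Let D_i > 0, b > 0, let α = (α_{ij}) be a symmetric m × m matrix with nonnegative entries, and let φ_i ∈ C²(I_i) satisfy the Neumann condition φ_i'(a_i) = 0 at every outer vertex and the Kedem–Katchalsky conditions at the node: D_i φ_i'(N) = Σ_{j=1}^m α_{ij}(φ_j(N) − φ_i(N)) for incoming i and −D_i φ_i'(N) = Σ_{j=1}^m α_{ij}(φ_j(N) − φ_i(N)) for outgoing i. Then Σ_{i=1}^m ∫_{I_i} (D_i φ_i''(x) − b φ_i(x)) φ_i(x) dx = −(1/2) Σ_{i,j=1}^m α_{ij}(φ_j(N) − φ_i(N))² − Σ_{i=1}^m ∫_{I_i} (D_i φ_i'(x)² + b φ_i(x)²) dx; in particular the left-hand side is nonpositive. -/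
open Finset intervalIntegral

lemma ibp_aux (f : ℝ → ℝ) (hf : ContDiff ℝ 2 f) (a c : ℝ) :
    ∫ x in a..c, deriv (deriv f) x * f x
      = deriv f c * f c - deriv f a * f a - ∫ x in a..c, (deriv f x) ^ 2 := by
  have h2 : ContDiff ℝ ((1 : WithTop ℕ∞) + 1) f := hf.of_le (by norm_num)
  obtain ⟨hdiff, -, hd1⟩ := contDiff_succ_iff_deriv.mp h2
  have hcf : Continuous f := hf.continuous
  have hcf' : Continuous (deriv f) := hd1.continuous
  have hcf'' : Continuous (deriv (deriv f)) := hd1.continuous_deriv le_rfl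
  have hd1' : Differentiable ℝ (deriv f) := hd1.differentiable one_ne_zero
  have key : ∫ x in a..c, (deriv (deriv f) x * f x + deriv f x * deriv f x)
      = deriv f c * f c - deriv f a * f a := by
    apply integral_deriv_mul_eq_sub
    · intro x _; exact (hd1' x).hasDerivAt
    · intro x _; exact (hdiff x).hasDerivAt
    · exact hcf''.intervalIntegrable _ _
    · exact hcf'.intervalIntegrable _ _
  have h1 : IntervalIntegrable (fun x => deriv (deriv f) x * f x) MeasureTheory.volume a c :=
    (hcf''.mul hcf).intervalIntegrable _ _
  have h2' : IntervalIntegrable (fun x => (deriv f x) ^ 2) MeasureTheory.volume a c :=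
    (hcf'.pow 2).intervalIntegrable _ _
  have := intervalIntegral.integral_add h1 h2'
  simp only [sq] at *
  linarith [key, this]

lemma arc_aux (f : ℝ → ℝ) (hf : ContDiff ℝ 2 f) (d bb a c : ℝ) :
    ∫ x in a..c, (d * deriv (deriv f) x - bb * f x) * f x
      = d * (deriv f c * f c - deriv f a * f a)
        - ∫ x in a..c, (d * (deriv f x) ^ 2 + bb * (f x) ^ 2) := by
  have h2 : ContDiff ℝ ((1 : WithTop ℕ∞) + 1) f := hf.of_le (by norm_num)
  obtain ⟨hdiff, -, hd1⟩ := contDiff_succ_iff_deriv.mp h2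
  have hcf : Continuous f := hf.continuous
  have hcf' : Continuous (deriv f) := hd1.continuous
  have hcf'' : Continuous (deriv (deriv f)) := hd1.continuous_deriv le_rfl
  have e1 : (fun x => (d * deriv (deriv f) x - bb * f x) * f x)
      = fun x => d * (deriv (deriv f) x * f x) - bb * (f x) ^ 2 := by
    funext x; ring
  have i1 : IntervalIntegrable (fun x => deriv (deriv f) x * f x) MeasureTheory.volume a c :=
    (hcf''.mul hcf).intervalIntegrable _ _
  have i2 : IntervalIntegrable (fun x => (f x) ^ 2) MeasureTheory.volume a c :=
    (hcf.pow 2).intervalIntegrable _ _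
  have i3 : IntervalIntegrable (fun x => (deriv f x) ^ 2) MeasureTheory.volume a c :=
    (hcf'.pow 2).intervalIntegrable _ _
  rw [e1, intervalIntegral.integral_sub (i1.const_mul d) (i2.const_mul bb),
    intervalIntegral.integral_const_mul, intervalIntegral.integral_const_mul,
    intervalIntegral.integral_add (i3.const_mul d) (i2.const_mul bb),
    intervalIntegral.integral_const_mul, intervalIntegral.integral_const_mul,
    ibp_aux f hf a c]
  ring

/-- **Dissipativity of the parabolic operator on a star network.**
The star network has a single node `N` and `m` arcs; arc `i` is the interval
`[0, ℓ i]`, with the node at `x = ℓ i` if `inc i = true` (incoming arc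
`I_i = [a_i, N]`) and at `x = 0` if `inc i = false` (outgoing arc `I_i = [N, a_i]`);
the outer vertex `a_i` is the opposite endpoint.  Assume `D_i > 0`, `b > 0`, `α`
symmetric with nonnegative entries, `φ_i ∈ C²`, the Neumann condition `φ_i'(a_i) = 0`
and the Kedem–Katchalsky conditions at the node.  Then
`∑_i ∫_{I_i} (D_i φ_i'' - b φ_i) φ_i
  = -(1/2) ∑_{i,j} α_{ij} (φ_j(N) - φ_i(N))² - ∑_i ∫_{I_i} (D_i φ_i'² + b φ_i²)`,
and in particular the left-hand side is nonpositive. -/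
theorem parabolic_operator_dissipative_star_network
    {m : ℕ} (ℓ : Fin m → ℝ) (hℓ : ∀ i, 0 < ℓ i) (inc : Fin m → Bool)
    (D : Fin m → ℝ) (hD : ∀ i, 0 < D i) (b : ℝ) (hb : 0 < b)
    (α : Fin m → Fin m → ℝ) (hαsym : ∀ i j, α i j = α j i) (hαnn : ∀ i j, 0 ≤ α i j)
    (φ : Fin m → ℝ → ℝ) (hφ : ∀ i, ContDiff ℝ 2 (φ i))
    -- value of φ_j at the node
    (φN : Fin m → ℝ) (hφN : ∀ j, φN j = if inc j then φ j (ℓ j) else φ j 0)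
    -- Neumann condition at the outer vertices
    (hbc : ∀ i, (if inc i then deriv (φ i) 0 else deriv (φ i) (ℓ i)) = 0)
    -- Kedem–Katchalsky transmission conditions at the node
    (hnode_in : ∀ i, inc i = true →
      D i * deriv (φ i) (ℓ i) = ∑ j, α i j * (φN j - φN i))
    (hnode_out : ∀ i, inc i = false →
      -(D i * deriv (φ i) 0) = ∑ j, α i j * (φN j - φN i)) :
    (∑ i, ∫ x in (0 : ℝ)..(ℓ i), (D i * deriv (deriv (φ i)) x - b * φ i x) * φ i x
      = -((1 / 2) * ∑ i, ∑ j, α i j * (φN j - φN i) ^ 2)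
        - ∑ i, ∫ x in (0 : ℝ)..(ℓ i), (D i * (deriv (φ i) x) ^ 2 + b * (φ i x) ^ 2)) ∧
    ∑ i, ∫ x in (0 : ℝ)..(ℓ i), (D i * deriv (deriv (φ i)) x - b * φ i x) * φ i x ≤ 0 := by
  -- per-arc identity
  have harc : ∀ i, (∫ x in (0 : ℝ)..(ℓ i),
      (D i * deriv (deriv (φ i)) x - b * φ i x) * φ i x)
      = (∑ j, α i j * (φN j - φN i)) * φN i
        - ∫ x in (0 : ℝ)..(ℓ i), (D i * (deriv (φ i) x) ^ 2 + b * (φ i x) ^ 2) := by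
    intro i
    rw [arc_aux (φ i) (hφ i) (D i) b 0 (ℓ i)]
    congr 1
    have hb' := hbc i
    have hN := hφN i
    cases h : inc i with
    | true =>
      rw [h] at hb' hN; simp at hb' hN
      rw [← hnode_in i h, hb', hN]; ring
    | false =>
      rw [h] at hb' hN; simp at hb' hN
      rw [← hnode_out i h, hb', hN]; ring
  -- symmetrization identity
  have hsym : ∑ i, (∑ j, α i j * (φN j - φN i)) * φN i
      = -((1 / 2) * ∑ i, ∑ j, α i j * (φN j - φN i) ^ 2) := by
    have h1 : ∑ i, (∑ j, α i j * (φN j - φN i)) * φN i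
        = ∑ i, ∑ j, α i j * (φN j - φN i) * φN i := by
      refine Finset.sum_congr rfl fun i _ => ?_
      rw [Finset.sum_mul]
    have h2 : ∑ i, ∑ j, α i j * (φN j - φN i) * φN i
        = ∑ i, ∑ j, α i j * (φN i - φN j) * φN j := by
      rw [Finset.sum_comm]
      refine Finset.sum_congr rfl fun i _ => Finset.sum_congr rfl fun j _ => ?_
      rw [hαsym i j]
    have h3 : ∀ i j : Fin m, α i j * (φN j - φN i) * φN i + α i j * (φN i - φN j) * φN j
        = -(α i j * (φN j - φN i) ^ 2) := fun i j => by ring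
    have h4 : (∑ i, ∑ j, α i j * (φN j - φN i) * φN i)
        + ∑ i, ∑ j, α i j * (φN i - φN j) * φN j
        = -∑ i, ∑ j, α i j * (φN j - φN i) ^ 2 := by
      rw [← Finset.sum_add_distrib]
      rw [← Finset.sum_neg_distrib]
      refine Finset.sum_congr rfl fun i _ => ?_
      rw [← Finset.sum_add_distrib, ← Finset.sum_neg_distrib]
      exact Finset.sum_congr rfl fun j _ => h3 i j
    rw [h1]
    linarith [h2, h4]
  have hmain : ∑ i, ∫ x in (0 : ℝ)..(ℓ i),
      (D i * deriv (deriv (φ i)) x - b * φ i x) * φ i x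
      = -((1 / 2) * ∑ i, ∑ j, α i j * (φN j - φN i) ^ 2)
        - ∑ i, ∫ x in (0 : ℝ)..(ℓ i), (D i * (deriv (φ i) x) ^ 2 + b * (φ i x) ^ 2) := by
    rw [Finset.sum_congr rfl fun i _ => harc i, Finset.sum_sub_distrib, hsym]
  refine ⟨hmain, ?_⟩
  rw [hmain]
  have t1 : 0 ≤ ∑ i, ∑ j, α i j * (φN j - φN i) ^ 2 :=
    Finset.sum_nonneg fun i _ => Finset.sum_nonneg fun j _ =>
      mul_nonneg (hαnn i j) (sq_nonneg _)
  have t2 : 0 ≤ ∑ i, ∫ x in (0 : ℝ)..(ℓ i),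
      (D i * (deriv (φ i) x) ^ 2 + b * (φ i x) ^ 2) := by
    refine Finset.sum_nonneg fun i _ => ?_
    apply intervalIntegral.integral_nonneg (hℓ i).le
    intro x _
    exact add_nonneg (mul_nonneg (hD i).le (sq_nonneg _)) (mul_nonneg hb.le (sq_nonneg _))
  linarith
end

section
/- Consider a star network with a single node N and m arcs, arc I_i a compact interval joining the outer vertex a_i to N (incoming if I_i = [a_i, N], outgoing if I_i = [N, a_i]). Let λ_i > 0, let K = (K_{ij}) be a symmetric m × m matrix with nonnegative entries, and let u_i, v_i ∈ C¹(I_i) satisfy v_i(a_i) = 0 at every outer vertex and the transmission conditions at the node: −λ_i v_i(N) = Σ_{j=1}^m K_{ij}(u_j(N) − u_i(N)) for incoming i and λ_i v_i(N) = Σ_{j=1}^m K_{ij}(u_j(N) − u_i(N)) for outgoing i. Then Σ_{i=1}^m ∫_{I_i} (−λ_i v_i'(x) u_i(x) − λ_i u_i'(x) v_i(x)) dx = −(1/2) Σ_{i,j=1}^m K_{ij}(u_j(N) − u_i(N))²; in particular the left-hand side is nonpositive. -/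
open Finset intervalIntegral

/-- **Dissipativity of the hyperbolic operator on a star network.**
The star network has a single node `N` and `m` arcs; arc `i` is the interval
`[0, ℓ i]`, with the node at `x = ℓ i` if `inc i = true` (incoming arc
`I_i = [a_i, N]`) and at `x = 0` if `inc i = false` (outgoing arc `I_i = [N, a_i]`);
the outer vertex `a_i` is the opposite endpoint.  Assume `λ_i > 0`, `K` symmetric
with nonnegative entries, `u_i, v_i ∈ C¹`, `v_i(a_i) = 0`, and the transmission
conditions at the node.  Then
`∑_i ∫_{I_i} (-λ_i v_i' u_i - λ_i u_i' v_i)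
  = -(1/2) ∑_{i,j} K_{ij} (u_j(N) - u_i(N))²`,
and in particular the left-hand side is nonpositive. -/
theorem hyperbolic_operator_dissipative_star_network
    {m : ℕ} (ℓ : Fin m → ℝ) (hℓ : ∀ i, 0 < ℓ i) (inc : Fin m → Bool)
    (lam : Fin m → ℝ) (hlam : ∀ i, 0 < lam i)
    (K : Fin m → Fin m → ℝ) (hKsym : ∀ i j, K i j = K j i) (hKnn : ∀ i j, 0 ≤ K i j)
    (u v : Fin m → ℝ → ℝ)
    (hu : ∀ i, ContDiff ℝ 1 (u i)) (hv : ∀ i, ContDiff ℝ 1 (v i))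
    -- value of u_j at the node
    (uN : Fin m → ℝ) (huN : ∀ j, uN j = if inc j then u j (ℓ j) else u j 0)
    -- boundary condition at the outer vertices
    (hbc : ∀ i, (if inc i then v i 0 else v i (ℓ i)) = 0)
    -- transmission conditions at the node
    (hnode_in : ∀ i, inc i = true →
      -(lam i * v i (ℓ i)) = ∑ j, K i j * (uN j - uN i))
    (hnode_out : ∀ i, inc i = false →
      lam i * v i 0 = ∑ j, K i j * (uN j - uN i)) :
    (∑ i, ∫ x in (0 : ℝ)..(ℓ i),
        (-(lam i * deriv (v i) x * u i x) - lam i * deriv (u i) x * v i x)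
      = -((1 / 2) * ∑ i, ∑ j, K i j * (uN j - uN i) ^ 2)) ∧
    ∑ i, ∫ x in (0 : ℝ)..(ℓ i),
        (-(lam i * deriv (v i) x * u i x) - lam i * deriv (u i) x * v i x) ≤ 0 := by
  have harc : ∀ i, (∫ x in (0 : ℝ)..(ℓ i),
      (-(lam i * deriv (v i) x * u i x) - lam i * deriv (u i) x * v i x))
      = uN i * ∑ j, K i j * (uN j - uN i) := by
    intro i
    have hud := (hu i).differentiable one_ne_zero
    have hvd := (hv i).differentiable one_ne_zero
    have hderiv : ∀ x ∈ Set.uIcc (0:ℝ) (ℓ i),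
        HasDerivAt (fun x => -(lam i * (u i x * v i x)))
          (-(lam i * deriv (v i) x * u i x) - lam i * deriv (u i) x * v i x) x := by
      intro x _
      have h : HasDerivAt (fun x => -(lam i * (u i x * v i x)))
          (-(lam i * (deriv (u i) x * v i x + u i x * deriv (v i) x))) x :=
        (((hud x).hasDerivAt.mul (hvd x).hasDerivAt).const_mul (lam i)).neg
      convert h using 1
      ring
    have hcont : Continuous (fun x =>
        (-(lam i * deriv (v i) x * u i x) - lam i * deriv (u i) x * v i x)) := by
      have h1 := (hv i).continuous_deriv le_rfl
      have h2 := (hu i).continuous_deriv le_rfl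
      fun_prop
    have hint := intervalIntegral.integral_eq_sub_of_hasDerivAt hderiv
      (hcont.intervalIntegrable 0 (ℓ i))
    rw [hint]
    cases hi : inc i with
    | true =>
      have hb : v i 0 = 0 := by simpa [hi] using hbc i
      have hn := hnode_in i hi
      have huNi : uN i = u i (ℓ i) := by simp [huN i, hi]
      rw [← hn, hb, huNi]; ring
    | false =>
      have hb : v i (ℓ i) = 0 := by simpa [hi] using hbc i
      have hn := hnode_out i hi
      have huNi : uN i = u i 0 := by simp [huN i, hi]
      rw [← hn, hb, huNi]; ring
  have hsum : (∑ i, ∫ x in (0 : ℝ)..(ℓ i),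
      (-(lam i * deriv (v i) x * u i x) - lam i * deriv (u i) x * v i x))
      = ∑ i, ∑ j, K i j * (uN j - uN i) * uN i := by
    rw [Finset.sum_congr rfl (fun i _ => harc i)]
    exact Finset.sum_congr rfl fun i _ => by
      rw [Finset.mul_sum]; exact Finset.sum_congr rfl fun j _ => by ring
  have hswap : ∑ i, ∑ j, K i j * (uN j - uN i) * uN i
      = ∑ i, ∑ j, K i j * (uN i - uN j) * uN j := by
    rw [Finset.sum_comm]
    exact Finset.sum_congr rfl fun i _ => Finset.sum_congr rfl fun j _ => by
      rw [hKsym i j]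
  have key : ∑ i, ∑ j, K i j * (uN j - uN i) * uN i
      = -((1 / 2) * ∑ i, ∑ j, K i j * (uN j - uN i) ^ 2) := by
    have h2 : (∑ i, ∑ j, K i j * (uN j - uN i) * uN i)
        + (∑ i, ∑ j, K i j * (uN i - uN j) * uN j)
        = -(∑ i, ∑ j, K i j * (uN j - uN i) ^ 2) := by
      rw [← Finset.sum_add_distrib, ← Finset.sum_neg_distrib]
      exact Finset.sum_congr rfl fun i _ => by
        rw [← Finset.sum_add_distrib, ← Finset.sum_neg_distrib]
        exact Finset.sum_congr rfl fun j _ => by ring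
    rw [← hswap] at h2
    linarith
  constructor
  · rw [hsum, key]
  · rw [hsum, key]
    have hnn : 0 ≤ ∑ i, ∑ j, K i j * (uN j - uN i) ^ 2 :=
      Finset.sum_nonneg fun i _ => Finset.sum_nonneg fun j _ =>
        mul_nonneg (hKnn i j) (sq_nonneg _)
    linarith
end

section
/- Consider a star network with a single node N and m arcs, arc I_i a compact interval joining the outer vertex a_i to N (incoming if I_i = [a_i, N], outgoing if I_i = [N, a_i]). Let D_i > 0, b > 0, and let α = (α_{ij}) be a symmetric m × m matrix with nonnegative entries. Then for every family f = (f_i) with f_i continuous on I_i, there exists a unique φ = (φ_i) with φ_i ∈ C²(I_i) such that −D_i φ_i''(x) + (1+b) φ_i(x) = f_i(x) on I_i for every i, with the Neumann conditions φ_i'(a_i) = 0 at every outer vertex and the Kedem–Katchalsky transmission conditions at the node: D_i φ_i'(N) = Σ_{j=1}^m α_{ij}(φ_j(N) − φ_i(N)) for incoming i and −D_i φ_i'(N) = Σ_{j=1}^m α_{ij}(φ_j(N) − φ_i(N)) for outgoing i. -/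
open Set intervalIntegral in

private lemma hasDerivAt_coshmul (μ x : ℝ) :
    HasDerivAt (fun y => Real.cosh (μ * y)) (μ * Real.sinh (μ * x)) x := by
  have h := (Real.hasDerivAt_cosh (μ * x)).comp x ((hasDerivAt_id x).const_mul μ)
  simpa [mul_comm, Function.comp_def] using h

private lemma hasDerivAt_sinhmul (μ x : ℝ) :
    HasDerivAt (fun y => Real.sinh (μ * y)) (μ * Real.cosh (μ * x)) x := by
  have h := (Real.hasDerivAt_sinh (μ * x)).comp x ((hasDerivAt_id x).const_mul μ)
  simpa [mul_comm, Function.comp_def] using h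

private lemma hasDerivAt_primitive {F : ℝ → ℝ} (hF : Continuous F) (x : ℝ) :
    HasDerivAt (fun y => ∫ t in (0:ℝ)..y, F t) (F x) x :=
  intervalIntegral.integral_hasDerivAt_right (hF.intervalIntegrable _ _)
    hF.aestronglyMeasurable.stronglyMeasurableAtFilter hF.continuousAt

private lemma contDiff_two_iff {f : ℝ → ℝ} :
    ContDiff ℝ 2 f ↔ Differentiable ℝ f ∧ Differentiable ℝ (deriv f)
      ∧ Continuous (deriv (deriv f)) := by
  rw [show (2 : WithTop ℕ∞) = 1 + 1 from by norm_num, contDiff_succ_iff_deriv,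
    contDiff_one_iff_deriv]
  simp [and_assoc]

/-- particular solution of `-D Q'' + D μ² Q = F` with `Q 0 = 0`, `Q' 0 = 0`. -/
private lemma exists_particular (D μ : ℝ) (hD : 0 < D) (hμ : 0 < μ)
    (F : ℝ → ℝ) (hF : Continuous F) :
    ∃ Q : ℝ → ℝ, ContDiff ℝ 2 Q ∧
      (∀ x, -(D * deriv (deriv Q) x) + (D * μ ^ 2) * Q x = F x) ∧
      Q 0 = 0 ∧ deriv Q 0 = 0 := by
  set A : ℝ → ℝ := fun x => ∫ t in (0:ℝ)..x, Real.cosh (μ * t) * F t with hAdef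
  set B : ℝ → ℝ := fun x => ∫ t in (0:ℝ)..x, Real.sinh (μ * t) * F t with hBdef
  have hcA : Continuous fun t => Real.cosh (μ * t) * F t :=
    ((Real.continuous_cosh.comp (continuous_const.mul continuous_id)).mul hF)
  have hcB : Continuous fun t => Real.sinh (μ * t) * F t :=
    ((Real.continuous_sinh.comp (continuous_const.mul continuous_id)).mul hF)
  have hA : ∀ x, HasDerivAt A (Real.cosh (μ * x) * F x) x := fun x =>
    hasDerivAt_primitive hcA x
  have hB : ∀ x, HasDerivAt B (Real.sinh (μ * x) * F x) x := fun x =>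
    hasDerivAt_primitive hcB x
  set Q : ℝ → ℝ := fun x =>
    -(1 / (D * μ)) * (Real.sinh (μ * x) * A x - Real.cosh (μ * x) * B x) with hQdef
  set G : ℝ → ℝ := fun x =>
    -(1 / D) * (Real.cosh (μ * x) * A x - Real.sinh (μ * x) * B x) with hGdef
  have hQ : ∀ x, HasDerivAt Q (G x) x := by
    intro x
    have h := ((((hasDerivAt_sinhmul μ x).mul (hA x)).sub
      ((hasDerivAt_coshmul μ x).mul (hB x))).const_mul (-(1 / (D * μ))))
    simp only [Pi.mul_apply, Pi.sub_apply] at h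
    refine h.congr_deriv ?_
    symm
    simp only [G]
    field_simp
    ring
  have hG : ∀ x, HasDerivAt G (μ ^ 2 * Q x - F x / D) x := by
    intro x
    have h := ((((hasDerivAt_coshmul μ x).mul (hA x)).sub
      ((hasDerivAt_sinhmul μ x).mul (hB x))).const_mul (-(1 / D)))
    simp only [Pi.mul_apply, Pi.sub_apply] at h
    refine h.congr_deriv ?_
    symm
    have hcs : Real.cosh (μ * x) ^ 2 - Real.sinh (μ * x) ^ 2 = 1 :=
      Real.cosh_sq_sub_sinh_sq (μ * x)
    simp only [Q]
    field_simp
    linear_combination (F x) * hcs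
  have hQdiff : Differentiable ℝ Q := fun x => (hQ x).differentiableAt
  have hdQ : deriv Q = G := funext fun x => (hQ x).deriv
  have hddQ : ∀ x, deriv (deriv Q) x = μ ^ 2 * Q x - F x / D := by
    intro x; rw [hdQ]; exact (hG x).deriv
  refine ⟨Q, ?_, ?_, ?_, ?_⟩
  · refine contDiff_two_iff.mpr ⟨hQdiff, ?_, ?_⟩
    · rw [hdQ]; exact fun x => (hG x).differentiableAt
    · have : deriv (deriv Q) = fun x => μ ^ 2 * Q x - F x / D := funext hddQ
      rw [this]
      exact ((continuous_const.mul hQdiff.continuous).sub (hF.div_const D))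
  · intro x
    rw [hddQ x]
    field_simp
    ring
  · simp [hQdef, hAdef, hBdef]
  · rw [hdQ]; simp [hGdef, hAdef, hBdef]

/-- Canonical arc problem: Neumann at `0`, node at `L`, prescribed node value `u`. -/
private lemma arc_solution (D c L : ℝ) (hD : 0 < D) (hc : 0 < c) (hL : 0 < L)
    (F : ℝ → ℝ) (hF : Continuous F) :
    ∃ κ r : ℝ, 0 < κ ∧ ∀ u : ℝ, ∃ χ : ℝ → ℝ, ContDiff ℝ 2 χ ∧
      (∀ x, -(D * deriv (deriv χ) x) + c * χ x = F x) ∧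
      deriv χ 0 = 0 ∧ χ L = u ∧ D * deriv χ L = κ * u + r := by
  set μ := Real.sqrt (c / D) with hμdef
  have hμ : 0 < μ := Real.sqrt_pos.mpr (div_pos hc hD)
  have hc' : D * μ ^ 2 = c := by
    rw [hμdef, Real.sq_sqrt (div_pos hc hD).le]
    field_simp
  obtain ⟨Q, hQcd, hQode, hQ0, hQ'0⟩ := exists_particular D μ hD hμ F hF
  have hQdiff : Differentiable ℝ Q := (contDiff_two_iff.mp hQcd).1
  have hQd1 : Differentiable ℝ (deriv Q) := (contDiff_two_iff.mp hQcd).2.1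
  have hcoshpos : 0 < Real.cosh (μ * L) := Real.cosh_pos (μ * L)
  set κ := D * μ * Real.sinh (μ * L) / Real.cosh (μ * L) with hκdef
  have hκ : 0 < κ := by
    apply div_pos _ hcoshpos
    have : 0 < Real.sinh (μ * L) := Real.sinh_pos_iff.mpr (by positivity)
    positivity
  refine ⟨κ, D * deriv Q L - κ * Q L, hκ, fun u => ?_⟩
  set v := (u - Q L) / Real.cosh (μ * L) with hvdef
  set χ : ℝ → ℝ := fun x => v * Real.cosh (μ * x) + Q x with hχdef
  have hχd : ∀ x, HasDerivAt χ (v * (μ * Real.sinh (μ * x)) + deriv Q x) x := fun x =>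
    ((hasDerivAt_coshmul μ x).const_mul v).add (hQdiff x).hasDerivAt
  have hdχ : deriv χ = fun x => v * (μ * Real.sinh (μ * x)) + deriv Q x :=
    funext fun x => (hχd x).deriv
  have hχd2 : ∀ x, deriv (deriv χ) x = v * (μ * (μ * Real.cosh (μ * x))) + deriv (deriv Q) x := by
    intro x
    rw [hdχ]
    exact ((((hasDerivAt_sinhmul μ x).const_mul μ).const_mul v).add
      (hQd1 x).hasDerivAt).deriv
  refine ⟨χ, ?_, ?_, ?_, ?_, ?_⟩
  · exact (contDiff_const.mul
      (Real.contDiff_cosh.comp ((contDiff_const.mul contDiff_id)))).add hQcd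
  · intro x
    have h := hQode x
    rw [hχd2 x, hχdef]
    simp only
    rw [← hc']
    nlinarith [h]
  · rw [hdχ]; simp [hQ'0]
  · rw [hχdef]
    simp only [hvdef]
    field_simp
    ring
  · rw [hdχ]
    simp only [hvdef, hκdef]
    field_simp
    ring

private lemma sym_sum_nonneg {m : ℕ} (α : Fin m → Fin m → ℝ)
    (hsym : ∀ i j, α i j = α j i) (hnn : ∀ i j, 0 ≤ α i j) (u : Fin m → ℝ) :
    0 ≤ ∑ i, ∑ j, α i j * (u i * (u i - u j)) := by
  have key : ∀ i j : Fin m, α i j * (u i * (u i - u j)) + α j i * (u j * (u j - u i))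
      = α i j * (u i - u j) ^ 2 := by
    intro i j; rw [hsym j i]; ring
  have h2 : (∑ i, ∑ j, α i j * (u i * (u i - u j))) * 2
      = ∑ i, ∑ j, α i j * (u i - u j) ^ 2 := by
    rw [mul_two]
    nth_rewrite 2 [Finset.sum_comm]
    rw [← Finset.sum_add_distrib]
    refine Finset.sum_congr rfl fun i _ => ?_
    rw [← Finset.sum_add_distrib]
    exact Finset.sum_congr rfl fun j _ => key i j
  have hnn2 : 0 ≤ ∑ i, ∑ j, α i j * (u i - u j) ^ 2 :=
    Finset.sum_nonneg fun i _ => Finset.sum_nonneg fun j _ =>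
      mul_nonneg (hnn i j) (sq_nonneg _)
  linarith

private lemma exists_node_values {m : ℕ} (κ r : Fin m → ℝ) (hκ : ∀ i, 0 < κ i)
    (α : Fin m → Fin m → ℝ) (hsym : ∀ i j, α i j = α j i) (hnn : ∀ i j, 0 ≤ α i j) :
    ∃ u : Fin m → ℝ, ∀ i, κ i * u i + r i = ∑ j, α i j * (u j - u i) := by
  set T : (Fin m → ℝ) →ₗ[ℝ] (Fin m → ℝ) :=
    { toFun := fun u i => κ i * u i + ∑ j, α i j * (u i - u j)
      map_add' := by
        intro u v; funext i
        simp only [Pi.add_apply]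
        have h : (∑ j, α i j * ((u i + v i) - (u j + v j)))
            = (∑ j, α i j * (u i - u j)) + ∑ j, α i j * (v i - v j) := by
          rw [← Finset.sum_add_distrib]
          exact Finset.sum_congr rfl fun j _ => by ring
        rw [h]; ring
      map_smul' := by
        intro a u; funext i
        simp only [Pi.smul_apply, smul_eq_mul, RingHom.id_apply]
        have h : (∑ j, α i j * (a * u i - a * u j)) = ∑ j, a * (α i j * (u i - u j)) :=
          Finset.sum_congr rfl fun j _ => by ring
        rw [h, ← Finset.mul_sum]; ring } with hTdef
  have hinj : Function.Injective T := by
    rw [← LinearMap.ker_eq_bot, LinearMap.ker_eq_bot']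
    intro u hu
    have hu' : ∀ i, κ i * u i + ∑ j, α i j * (u i - u j) = 0 := by
      intro i
      have := congrFun hu i
      simpa [hTdef] using this
    have expand : ∀ i, u i * (κ i * u i + ∑ j, α i j * (u i - u j))
        = κ i * u i ^ 2 + ∑ j, α i j * (u i * (u i - u j)) := by
      intro i
      have h : ∀ j : Fin m, u i * (α i j * (u i - u j)) = α i j * (u i * (u i - u j)) :=
        fun j => by ring
      rw [mul_add, Finset.mul_sum, Finset.sum_congr rfl fun j _ => h j]; ring
    have hsum : (∑ i, κ i * u i ^ 2) + ∑ i, ∑ j, α i j * (u i * (u i - u j)) = 0 := by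
      calc (∑ i, κ i * u i ^ 2) + ∑ i, ∑ j, α i j * (u i * (u i - u j))
          = ∑ i, (κ i * u i ^ 2 + ∑ j, α i j * (u i * (u i - u j))) :=
            Finset.sum_add_distrib.symm
        _ = ∑ i, u i * (κ i * u i + ∑ j, α i j * (u i - u j)) :=
            Finset.sum_congr rfl fun i _ => (expand i).symm
        _ = 0 := by simp [hu']
    have hS := sym_sum_nonneg α hsym hnn u
    have hterm : ∀ i ∈ Finset.univ, 0 ≤ κ i * u i ^ 2 := fun i _ =>
      mul_nonneg (hκ i).le (sq_nonneg _)
    have hzero : ∑ i, κ i * u i ^ 2 = 0 :=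
      le_antisymm (by linarith) (Finset.sum_nonneg hterm)
    funext i
    have h0 := (Finset.sum_eq_zero_iff_of_nonneg hterm).mp hzero i (Finset.mem_univ i)
    have : u i = 0 := by
      rcases mul_eq_zero.mp h0 with h | h
      · exact absurd h (hκ i).ne'
      · exact pow_eq_zero_iff (by norm_num) |>.mp h
    simpa using this
  obtain ⟨u, hu⟩ := LinearMap.injective_iff_surjective.mp hinj (fun i => -r i)
  refine ⟨u, fun i => ?_⟩
  have h : κ i * u i + ∑ j, α i j * (u i - u j) = -r i := by
    have := congrFun hu i
    simpa [hTdef] using this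
  have h2 : ∑ j, α i j * (u j - u i) = -∑ j, α i j * (u i - u j) := by
    rw [← Finset.sum_neg_distrib]
    exact Finset.sum_congr rfl fun j _ => by ring
  rw [h2]; linarith

private lemma energy_identity (Dk c L : ℝ) (hD : 0 < Dk) (hL : 0 < L)
    (w : ℝ → ℝ) (hw : ContDiff ℝ 2 w)
    (hode : ∀ x ∈ Set.Icc (0:ℝ) L, -(Dk * deriv (deriv w) x) + c * w x = 0) :
    c * (∫ x in (0:ℝ)..L, (w x) ^ 2) + Dk * (∫ x in (0:ℝ)..L, (deriv w x) ^ 2)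
      = Dk * (deriv w L * w L - deriv w 0 * w 0) := by
  obtain ⟨hd0, hd1, hd2⟩ := contDiff_two_iff.mp hw
  have hc0 : Continuous w := hd0.continuous
  have hc1 : Continuous (deriv w) := hd1.continuous
  have hprod : ∀ x, HasDerivAt (fun y => deriv w y * w y)
      (deriv (deriv w) x * w x + deriv w x * deriv w x) x := fun x =>
    ((hd1 x).hasDerivAt.mul (hd0 x).hasDerivAt)
  have hcont : Continuous fun x => deriv (deriv w) x * w x + deriv w x * deriv w x :=
    (hd2.mul hc0).add (hc1.mul hc1)
  have hftc : (∫ x in (0:ℝ)..L, (deriv (deriv w) x * w x + deriv w x * deriv w x))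
      = deriv w L * w L - deriv w 0 * w 0 :=
    intervalIntegral.integral_eq_sub_of_hasDerivAt (fun x _ => hprod x)
      (hcont.intervalIntegrable _ _)
  have hsplit : (∫ x in (0:ℝ)..L, (deriv (deriv w) x * w x + deriv w x * deriv w x))
      = (∫ x in (0:ℝ)..L, deriv (deriv w) x * w x)
        + ∫ x in (0:ℝ)..L, (deriv w x) ^ 2 := by
    have hsq : (∫ x in (0:ℝ)..L, (deriv w x) ^ 2)
        = ∫ x in (0:ℝ)..L, deriv w x * deriv w x := by simp [sq]
    rw [hsq, intervalIntegral.integral_add (f := fun x => deriv (deriv w) x * w x)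
      (g := fun x => deriv w x * deriv w x) ((hd2.mul hc0).intervalIntegrable _ _)
      ((hc1.mul hc1).intervalIntegrable _ _)]
  have hcongr : (∫ x in (0:ℝ)..L, deriv (deriv w) x * w x)
      = ∫ x in (0:ℝ)..L, (c / Dk) * (w x) ^ 2 := by
    apply intervalIntegral.integral_congr
    intro x hx
    rw [Set.uIcc_of_le hL.le] at hx
    have h := hode x hx
    have : deriv (deriv w) x = (c / Dk) * w x := by
      field_simp
      linarith
    show deriv (deriv w) x * w x = c / Dk * (w x) ^ 2
    rw [this]; ring
  have hmul : (∫ x in (0:ℝ)..L, (c / Dk) * (w x) ^ 2)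
      = (c / Dk) * ∫ x in (0:ℝ)..L, (w x) ^ 2 := intervalIntegral.integral_const_mul _ _
  have : (c / Dk) * (∫ x in (0:ℝ)..L, (w x) ^ 2) + (∫ x in (0:ℝ)..L, (deriv w x) ^ 2)
      = deriv w L * w L - deriv w 0 * w 0 := by
    rw [← hmul, ← hcongr, ← hsplit, hftc]
  field_simp at this
  nlinarith [this]

private lemma zero_on_Icc {L : ℝ} (hL : 0 < L) {w : ℝ → ℝ} (hw : Continuous w)
    (hint : (∫ x in (0:ℝ)..L, (w x) ^ 2) = 0) : ∀ x ∈ Set.Icc (0:ℝ) L, w x = 0 := by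
  by_contra hcon
  push_neg at hcon
  obtain ⟨x, hx, hne⟩ := hcon
  have := intervalIntegral.integral_pos (f := fun y => (w y) ^ 2) hL ((hw.pow 2).continuousOn)
    (fun y _ => sq_nonneg _) ⟨x, hx, by positivity⟩
  linarith

private lemma deriv_reflect {χ : ℝ → ℝ} (h : Differentiable ℝ χ) (c : ℝ) :
    deriv (fun y => χ (c - y)) = fun x => -deriv χ (c - x) := by
  funext x
  have hcs : HasDerivAt (fun y : ℝ => c - y) (-1) x := by
    simpa using (hasDerivAt_id x).const_sub c
  have := ((h (c - x)).hasDerivAt.comp x hcs)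
  simpa [Function.comp_def] using this.deriv

private lemma deriv2_reflect {χ : ℝ → ℝ} (h : ContDiff ℝ 2 χ) (c : ℝ) :
    deriv (deriv (fun y => χ (c - y))) = fun x => deriv (deriv χ) (c - x) := by
  obtain ⟨hd0, hd1, _⟩ := contDiff_two_iff.mp h
  rw [deriv_reflect hd0 c]
  funext x
  have h1 : deriv (fun y => deriv χ (c - y)) = fun x => -deriv (deriv χ) (c - x) :=
    deriv_reflect hd1 c
  have : deriv (fun y => -deriv χ (c - y)) x = -deriv (fun y => deriv χ (c - y)) x := by
    apply deriv.neg
  rw [this, h1]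
  ring

open Finset

/-- **Solvability of the resolvent problem for the parabolic network operator.**
The star network has a single node `N` and `m` arcs; arc `i` is the interval
`[0, ℓ i]`, with the node at `x = ℓ i` if `inc i = true` (incoming arc
`I_i = [a_i, N]`) and at `x = 0` otherwise (outgoing arc `I_i = [N, a_i]`);
the outer vertex `a_i` is the opposite endpoint.  Assume `D_i > 0`, `b > 0` and `α`
symmetric with nonnegative entries.  Then for every family `f = (f_i)` of functions
continuous on `I_i` there exists a `φ = (φ_i)` with `φ_i ∈ C²` satisfying
`-D_i φ_i'' + (1+b) φ_i = f_i` on `I_i`, the Neumann conditions `φ_i'(a_i) = 0` and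
the Kedem–Katchalsky conditions at the node, and `φ` is unique (any two such
solutions agree on each arc `I_i`). -/
theorem resolvent_solvable_parabolic_star_network
    {m : ℕ} (ℓ : Fin m → ℝ) (hℓ : ∀ i, 0 < ℓ i) (inc : Fin m → Bool)
    (D : Fin m → ℝ) (hD : ∀ i, 0 < D i) (b : ℝ) (hb : 0 < b)
    (α : Fin m → Fin m → ℝ) (hαsym : ∀ i j, α i j = α j i) (hαnn : ∀ i j, 0 ≤ α i j)
    (f : Fin m → ℝ → ℝ) (hf : ∀ i, ContinuousOn (f i) (Set.Icc 0 (ℓ i))) :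
    ∃ φ : Fin m → ℝ → ℝ,
      ((∀ i, ContDiff ℝ 2 (φ i)) ∧
       (∀ i, ∀ x ∈ Set.Icc (0 : ℝ) (ℓ i),
          -(D i * deriv (deriv (φ i)) x) + (1 + b) * φ i x = f i x) ∧
       (∀ i, (if inc i then deriv (φ i) 0 else deriv (φ i) (ℓ i)) = 0) ∧
       (∀ i, inc i = true →
          D i * deriv (φ i) (ℓ i) = ∑ j,
            α i j * ((if inc j then φ j (ℓ j) else φ j 0)
              - (if inc i then φ i (ℓ i) else φ i 0))) ∧
       (∀ i, inc i = false →
          -(D i * deriv (φ i) 0) = ∑ j,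
            α i j * ((if inc j then φ j (ℓ j) else φ j 0)
              - (if inc i then φ i (ℓ i) else φ i 0)))) ∧
      (∀ ψ : Fin m → ℝ → ℝ,
        ((∀ i, ContDiff ℝ 2 (ψ i)) ∧
         (∀ i, ∀ x ∈ Set.Icc (0 : ℝ) (ℓ i),
            -(D i * deriv (deriv (ψ i)) x) + (1 + b) * ψ i x = f i x) ∧
         (∀ i, (if inc i then deriv (ψ i) 0 else deriv (ψ i) (ℓ i)) = 0) ∧
         (∀ i, inc i = true →
            D i * deriv (ψ i) (ℓ i) = ∑ j,
              α i j * ((if inc j then ψ j (ℓ j) else ψ j 0)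
                - (if inc i then ψ i (ℓ i) else ψ i 0))) ∧
         (∀ i, inc i = false →
            -(D i * deriv (ψ i) 0) = ∑ j,
              α i j * ((if inc j then ψ j (ℓ j) else ψ j 0)
                - (if inc i then ψ i (ℓ i) else ψ i 0)))) →
        ∀ i, ∀ x ∈ Set.Icc (0 : ℝ) (ℓ i), ψ i x = φ i x) := by
  have hc : (0:ℝ) < 1 + b := by linarith
  -- canonical-orientation data
  set g : Fin m → ℝ → ℝ := fun i x => if inc i then f i x else f i (ℓ i - x) with hgdef
  have hg : ∀ i, ContinuousOn (g i) (Set.Icc 0 (ℓ i)) := by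
    intro i
    by_cases hI : inc i
    · simpa [hgdef, hI] using hf i
    · simp only [hgdef, hI, Bool.false_eq_true, if_false]
      exact (hf i).comp (continuous_const.sub continuous_id).continuousOn
        (fun x hx => ⟨by simp; linarith [hx.2], by simp; linarith [hx.1]⟩)
  -- continuous extensions
  set Fe : Fin m → ℝ → ℝ :=
    fun i => Set.IccExtend (hℓ i).le (Set.restrict (Set.Icc 0 (ℓ i)) (g i)) with hFedef
  have hFc : ∀ i, Continuous (Fe i) := fun i =>
    Continuous.Icc_extend' (continuousOn_iff_continuous_restrict.mp (hg i))
  have hFeq : ∀ i, ∀ x ∈ Set.Icc (0:ℝ) (ℓ i), Fe i x = g i x := by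
    intro i x hx
    rw [hFedef]
    simp only
    rw [Set.IccExtend_of_mem _ _ hx]
    rfl
  -- per-arc solutions
  choose κ r hκpos hsol using fun i =>
    arc_solution (D i) (1 + b) (ℓ i) (hD i) hc (hℓ i) (Fe i) (hFc i)
  obtain ⟨u, husys⟩ := exists_node_values κ r hκpos α hαsym hαnn
  choose χ hχcd hχode hχ'0 hχL hχ'L using fun i => hsol i (u i)
  set φ : Fin m → ℝ → ℝ :=
    fun i => if inc i then χ i else fun x => χ i (ℓ i - x) with hφdef
  have hχdiff : ∀ i, Differentiable ℝ (χ i) := fun i => (contDiff_two_iff.mp (hχcd i)).1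
  -- node values of φ
  have nodeval : ∀ j, (if inc j then φ j (ℓ j) else φ j 0) = u j := by
    intro j
    by_cases hI : inc j
    · simp [hφdef, hI, hχL j]
    · simp [hφdef, hI, hχL j]
  have hφcd : ∀ i, ContDiff ℝ 2 (φ i) := by
    intro i
    by_cases hI : inc i
    · simpa [hφdef, hI] using hχcd i
    · simp only [hφdef, hI, Bool.false_eq_true, if_false]
      exact (hχcd i).comp (contDiff_const.sub contDiff_id)
  have hφode : ∀ i, ∀ x ∈ Set.Icc (0 : ℝ) (ℓ i),
      -(D i * deriv (deriv (φ i)) x) + (1 + b) * φ i x = f i x := by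
    intro i x hx
    by_cases hI : inc i
    · have h := hχode i x
      rw [hFeq i x hx] at h
      simp only [hgdef, hI, if_true] at h
      simpa [hφdef, hI] using h
    · have hmem : ℓ i - x ∈ Set.Icc (0:ℝ) (ℓ i) := ⟨by linarith [hx.2], by linarith [hx.1]⟩
      have h := hχode i (ℓ i - x)
      rw [hFeq i _ hmem] at h
      simp only [hgdef, hI, Bool.false_eq_true, if_false, sub_sub_cancel] at h
      simp only [hφdef, hI, Bool.false_eq_true, if_false]
      rw [deriv2_reflect (hχcd i) (ℓ i)]
      exact h
  have hφneu : ∀ i, (if inc i then deriv (φ i) 0 else deriv (φ i) (ℓ i)) = 0 := by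
    intro i
    by_cases hI : inc i
    · simp [hφdef, hI, hχ'0 i]
    · simp only [hφdef, hI, Bool.false_eq_true, if_false]
      rw [deriv_reflect (hχdiff i) (ℓ i)]
      simp [hχ'0 i]
  have hφin : ∀ i, inc i = true →
      D i * deriv (φ i) (ℓ i) = ∑ j,
        α i j * ((if inc j then φ j (ℓ j) else φ j 0)
          - (if inc i then φ i (ℓ i) else φ i 0)) := by
    intro i hI
    have : ∑ j, α i j * ((if inc j then φ j (ℓ j) else φ j 0)
        - (if inc i then φ i (ℓ i) else φ i 0)) = ∑ j, α i j * (u j - u i) :=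
      Finset.sum_congr rfl fun j _ => by rw [nodeval j, nodeval i]
    rw [this, ← husys i]
    simp only [hφdef, hI, if_true]
    exact hχ'L i
  have hφout : ∀ i, inc i = false →
      -(D i * deriv (φ i) 0) = ∑ j,
        α i j * ((if inc j then φ j (ℓ j) else φ j 0)
          - (if inc i then φ i (ℓ i) else φ i 0)) := by
    intro i hI
    have h1 : ∑ j, α i j * ((if inc j then φ j (ℓ j) else φ j 0)
        - (if inc i then φ i (ℓ i) else φ i 0)) = ∑ j, α i j * (u j - u i) :=
      Finset.sum_congr rfl fun j _ => by rw [nodeval j, nodeval i]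
    rw [h1, ← husys i]
    simp only [hφdef, hI, Bool.false_eq_true, if_false]
    rw [deriv_reflect (hχdiff i) (ℓ i)]
    simp only [sub_zero, mul_neg, neg_neg]
    exact hχ'L i
  refine ⟨φ, ⟨hφcd, hφode, hφneu, hφin, hφout⟩, ?_⟩
  -- uniqueness
  rintro ψ ⟨hψcd, hψode, hψneu, hψin, hψout⟩
  set w : Fin m → ℝ → ℝ := fun i x => ψ i x - φ i x with hwdef
  have hwcd : ∀ i, ContDiff ℝ 2 (w i) := fun i => (hψcd i).sub (hφcd i)
  have hψd := fun i => contDiff_two_iff.mp (hψcd i)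
  have hφd := fun i => contDiff_two_iff.mp (hφcd i)
  have hdw : ∀ i, deriv (w i) = fun x => deriv (ψ i) x - deriv (φ i) x := by
    intro i; funext x
    exact deriv_sub ((hψd i).1 x) ((hφd i).1 x)
  have hddw : ∀ i, deriv (deriv (w i))
      = fun x => deriv (deriv (ψ i)) x - deriv (deriv (φ i)) x := by
    intro i
    rw [hdw i]; funext x
    exact deriv_sub ((hψd i).2.1 x) ((hφd i).2.1 x)
  have hwode : ∀ i, ∀ x ∈ Set.Icc (0:ℝ) (ℓ i),
      -(D i * deriv (deriv (w i)) x) + (1 + b) * w i x = 0 := by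
    intro i x hx
    have h1 := hψode i x hx
    have h2 := hφode i x hx
    rw [hddw i]
    simp only [hwdef]
    ring_nf
    ring_nf at h1 h2
    linarith
  -- node values of w
  set ν : Fin m → ℝ := fun j => (if inc j then w j (ℓ j) else w j 0) with hνdef
  -- energy per arc
  have hEq : ∀ i, (1 + b) * (∫ x in (0:ℝ)..(ℓ i), (w i x) ^ 2)
      + D i * (∫ x in (0:ℝ)..(ℓ i), (deriv (w i) x) ^ 2)
      = (∑ j, α i j * (ν j - ν i)) * ν i := by
    intro i
    have hen := energy_identity (D i) (1 + b) (ℓ i) (hD i) (hℓ i) (w i) (hwcd i)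
      (hwode i)
    rw [hen]
    have hsub : ∀ j, (if inc j then ψ j (ℓ j) else ψ j 0)
        - (if inc j then φ j (ℓ j) else φ j 0) = ν j := by
      intro j
      by_cases hI : inc j <;> simp [hνdef, hwdef, hI]
    by_cases hI : inc i
    · have hne : deriv (w i) 0 = 0 := by
        rw [hdw i]
        have h1 := hψneu i; have h2 := hφneu i
        rw [if_pos hI] at h1 h2
        simp [h1, h2]
      have hnode : D i * deriv (w i) (ℓ i) = ∑ j, α i j * (ν j - ν i) := by
        have e : deriv (w i) (ℓ i) = deriv (ψ i) (ℓ i) - deriv (φ i) (ℓ i) := by rw [hdw i]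
        rw [e, mul_sub, hψin i hI, hφin i hI, ← Finset.sum_sub_distrib]
        refine Finset.sum_congr rfl fun j _ => ?_
        rw [← hsub j, ← hsub i]
        ring
      have hν : w i (ℓ i) = ν i := by simp [hνdef, hI]
      rw [hne, hν]
      calc D i * (deriv (w i) (ℓ i) * ν i - 0 * w i 0)
          = (D i * deriv (w i) (ℓ i)) * ν i := by ring
        _ = (∑ j, α i j * (ν j - ν i)) * ν i := by rw [hnode]
    · have hIf : inc i = false := by simpa using hI
      have hne : deriv (w i) (ℓ i) = 0 := by
        rw [hdw i]
        have h1 := hψneu i; have h2 := hφneu i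
        rw [if_neg hI] at h1 h2
        simp [h1, h2]
      have hnode : -(D i * deriv (w i) 0) = ∑ j, α i j * (ν j - ν i) := by
        have e : deriv (w i) 0 = deriv (ψ i) 0 - deriv (φ i) 0 := by rw [hdw i]
        rw [e, show -(D i * (deriv (ψ i) 0 - deriv (φ i) 0))
            = -(D i * deriv (ψ i) 0) - -(D i * deriv (φ i) 0) from by ring,
          hψout i hIf, hφout i hIf, ← Finset.sum_sub_distrib]
        refine Finset.sum_congr rfl fun j _ => ?_
        rw [← hsub j, ← hsub i]
        ring
      have hν : w i 0 = ν i := by simp [hνdef, hI]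
      rw [hne, hν]
      calc D i * (0 * w i (ℓ i) - deriv (w i) 0 * ν i)
          = (-(D i * deriv (w i) 0)) * ν i := by ring
        _ = (∑ j, α i j * (ν j - ν i)) * ν i := by rw [hnode]
  -- conclude from energy
  intro i x hx
  set I2 : Fin m → ℝ := fun j => ∫ t in (0:ℝ)..(ℓ j), (w j t) ^ 2 with hI2def
  set I1 : Fin m → ℝ := fun j => ∫ t in (0:ℝ)..(ℓ j), (deriv (w j) t) ^ 2 with hI1def
  have hI2nn : ∀ j, 0 ≤ I2 j := fun j =>
    intervalIntegral.integral_nonneg (hℓ j).le (fun t _ => sq_nonneg _)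
  have hI1nn : ∀ j, 0 ≤ I1 j := fun j =>
    intervalIntegral.integral_nonneg (hℓ j).le (fun t _ => sq_nonneg _)
  have hterm : ∀ j ∈ Finset.univ, (0:ℝ) ≤ (1 + b) * I2 j + D j * I1 j := fun j _ =>
    add_nonneg (mul_nonneg hc.le (hI2nn j)) (mul_nonneg (hD j).le (hI1nn j))
  have hsum_rhs : ∑ j, (∑ k, α j k * (ν k - ν j)) * ν j
      = -∑ j, ∑ k, α j k * (ν j * (ν j - ν k)) := by
    rw [← Finset.sum_neg_distrib]
    refine Finset.sum_congr rfl fun j _ => ?_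
    rw [Finset.sum_mul, ← Finset.sum_neg_distrib]
    exact Finset.sum_congr rfl fun k _ => by ring
  have hS := sym_sum_nonneg α hαsym hαnn ν
  have htot : ∑ j, ((1 + b) * I2 j + D j * I1 j)
      = ∑ j, (∑ k, α j k * (ν k - ν j)) * ν j :=
    Finset.sum_congr rfl fun j _ => hEq j
  have hzero : ∑ j, ((1 + b) * I2 j + D j * I1 j) = 0 :=
    le_antisymm (by rw [htot, hsum_rhs]; linarith) (Finset.sum_nonneg hterm)
  have hz := (Finset.sum_eq_zero_iff_of_nonneg hterm).mp hzero i (Finset.mem_univ i)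
  have h1 : (1 + b) * I2 i ≤ 0 := by
    have := mul_nonneg (hD i).le (hI1nn i)
    linarith
  have h3 : (1 + b) * I2 i = 0 := le_antisymm h1 (mul_nonneg hc.le (hI2nn i))
  have hI2z : I2 i = 0 := by
    rcases mul_eq_zero.mp h3 with h | h
    · linarith
    · exact h
  have hwz := zero_on_Icc (hℓ i) (contDiff_two_iff.mp (hwcd i)).1.continuous hI2z x hx
  have : ψ i x - φ i x = 0 := hwz
  linarith
end

section
/- Let (u, v, φ) be a local solution on [0,T] of the hyperbolic–parabolic chemotaxis system on a network. Then there exists a constant C > 0, depending only on the parameters of the problem, such that Σ_i ( sup_{t∈[0,T]} ‖u_i(t)‖₂² + sup_{t∈[0,T]} ‖v_i(t)‖₂² + β_i ∫₀ᵀ ‖v_i(t)‖₂² dt ) ≤ C Σ_i ( ‖u_{i0}‖₂² + ‖v_{i0}‖₂² + sup_{t∈[0,T]} ‖u_i(t)‖_{H¹} · ∫₀ᵀ ( ‖∂_x φ_i(t)‖₂² + ‖v_i(t)‖₂² ) dt ). -/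
open Finset intervalIntegral MeasureTheory

noncomputable section

/-! ### Partial derivatives (functions of time and space are written `f t x`) -/

/-- Spatial partial derivative `∂_x f` at `(t, x)`. -/
def pdx (f : ℝ → ℝ → ℝ) (t x : ℝ) : ℝ := deriv (f t) x

/-- Time partial derivative `∂_t f` at `(t, x)`. -/
def pdt (f : ℝ → ℝ → ℝ) (t x : ℝ) : ℝ := deriv (fun s => f s x) t

/-- Second spatial derivative `∂_{xx} f` at `(t, x)`. -/
def pdxx (f : ℝ → ℝ → ℝ) (t x : ℝ) : ℝ := deriv (deriv (f t)) x

/-- Mixed derivative `∂_{xt} f = ∂_t ∂_x f` at `(t, x)`. -/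
def pdxt (f : ℝ → ℝ → ℝ) (t x : ℝ) : ℝ := deriv (fun s => deriv (f s) x) t

/-! ### Squared Sobolev norms on an interval `(0, ℓ)` -/

/-- Square of the `L²(0,ℓ)` norm. -/
def L2sq (ℓ : ℝ) (f : ℝ → ℝ) : ℝ := ∫ x in (0:ℝ)..ℓ, (f x) ^ 2

/-- Square of the `H¹(0,ℓ)` norm. -/
def H1sq (ℓ : ℝ) (f : ℝ → ℝ) : ℝ := L2sq ℓ f + L2sq ℓ (deriv f)

/-- Square of the `H²(0,ℓ)` norm. -/
def H2sq (ℓ : ℝ) (f : ℝ → ℝ) : ℝ := H1sq ℓ f + L2sq ℓ (deriv (deriv f))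

/-- `L²(0,ℓ)` norm. -/
def L2n (ℓ : ℝ) (f : ℝ → ℝ) : ℝ := Real.sqrt (L2sq ℓ f)

/-- `H¹(0,ℓ)` norm. -/
def H1n (ℓ : ℝ) (f : ℝ → ℝ) : ℝ := Real.sqrt (H1sq ℓ f)

/-- `H²(0,ℓ)` norm. -/
def H2n (ℓ : ℝ) (f : ℝ → ℝ) : ℝ := Real.sqrt (H2sq ℓ f)

/-- Supremum of `g` over the time interval `[0, T]`. -/
def supIcc (T : ℝ) (g : ℝ → ℝ) : ℝ := sSup (g '' Set.Icc 0 T)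

/-! ### Oriented networks -/

/-- An oriented network with nodes indexed by `P` and arcs indexed by `M`.
Arc `i` is parametrized by the compact interval `[0, len i]`; `first i`
(resp. `last i`) is the node sitting at the endpoint `x = 0` (resp. `x = len i`)
of the arc, `none` meaning that this endpoint is an outer boundary vertex.
An arc `i` is *incoming* at the node `ν` if `last i = some ν`, and *outgoing*
if `first i = some ν`. -/
structure Network (P M : Type) where
  len : M → ℝ
  len_pos : ∀ i, 0 < len i
  first : M → Option P
  last : M → Option P
  no_loop : ∀ i ν, ¬ (first i = some ν ∧ last i = some ν)

namespace Network

variable {P M : Type} [Fintype P] [Fintype M] [DecidableEq P] [DecidableEq M]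

/-- The set `M^ν` of arcs incident to the node `ν`. -/
def incident (G : Network P M) (ν : P) : Finset M :=
  Finset.univ.filter fun i => G.first i = some ν ∨ G.last i = some ν

/-- Trace at the node `ν` of a family `f` of functions on the arcs. -/
def trace (G : Network P M) (f : M → ℝ → ℝ) (ν : P) (j : M) : ℝ :=
  if G.last j = some ν then f j (G.len j) else f j 0

/-- Transmission conditions at the nodes for the hyperbolic unknowns `(u, v)`,
with transmission coefficients `K ν i j`. -/
def HypNode (G : Network P M) (lam : M → ℝ) (K : P → M → M → ℝ)
    (u v : M → ℝ → ℝ) : Prop :=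
  ∀ ν : P,
    (∀ i ∈ G.incident ν, G.last i = some ν →
      -(lam i * v i (G.len i)) =
        ∑ j ∈ G.incident ν, K ν i j * (G.trace u ν j - G.trace u ν i)) ∧
    (∀ i ∈ G.incident ν, G.first i = some ν →
      lam i * v i 0 =
        ∑ j ∈ G.incident ν, K ν i j * (G.trace u ν j - G.trace u ν i))

/-- Kedem–Katchalsky transmission conditions at the nodes for the parabolic
unknown `φ`, with transmission coefficients `α ν i j`. -/
def ParNode (G : Network P M) (D : M → ℝ) (α : P → M → M → ℝ)
    (φ : M → ℝ → ℝ) : Prop :=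
  ∀ ν : P,
    (∀ i ∈ G.incident ν, G.last i = some ν →
      D i * deriv (φ i) (G.len i) =
        ∑ j ∈ G.incident ν, α ν i j * (G.trace φ ν j - G.trace φ ν i)) ∧
    (∀ i ∈ G.incident ν, G.first i = some ν →
      -(D i * deriv (φ i) 0) =
        ∑ j ∈ G.incident ν, α ν i j * (G.trace φ ν j - G.trace φ ν i))

/-- Null condition for `v` at the outer boundary vertices of the network. -/
def OuterZero (G : Network P M) (v : M → ℝ → ℝ) : Prop :=
  ∀ i, (G.first i = none → v i 0 = 0) ∧ (G.last i = none → v i (G.len i) = 0)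

/-- `(u, v, φ)` is a (classical, smooth) solution of the hyperbolic–parabolic
chemotaxis system on the network `G` for times in the set `S`:
`∂_t u_i + λ_i ∂_x v_i = 0`, `∂_t v_i + λ_i ∂_x u_i = u_i ∂_x φ_i - β_i v_i`,
`∂_t φ_i = D_i ∂_{xx} φ_i + a u_i - b φ_i` on each arc, with null-flux boundary
conditions at the outer vertices and the transmission conditions at the nodes.
Functions are written `u i t x`. -/
structure IsSolution (G : Network P M) (lam beta D : M → ℝ) (a b : ℝ)
    (K α : P → M → M → ℝ) (S : Set ℝ) (u v φ : M → ℝ → ℝ → ℝ) : Prop where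
  reg_u : ∀ i, ContDiff ℝ 1 (Function.uncurry (u i))
  reg_v : ∀ i, ContDiff ℝ 1 (Function.uncurry (v i))
  reg_φ : ∀ i, ContDiff ℝ 2 (Function.uncurry (φ i))
  eq_u : ∀ i, ∀ t ∈ S, ∀ x ∈ Set.Icc 0 (G.len i),
    pdt (u i) t x + lam i * pdx (v i) t x = 0
  eq_v : ∀ i, ∀ t ∈ S, ∀ x ∈ Set.Icc 0 (G.len i),
    pdt (v i) t x + lam i * pdx (u i) t x = u i t x * pdx (φ i) t x - beta i * v i t x
  eq_φ : ∀ i, ∀ t ∈ S, ∀ x ∈ Set.Icc 0 (G.len i),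
    pdt (φ i) t x = D i * pdxx (φ i) t x + a * u i t x - b * φ i t x
  bc_v : ∀ t ∈ S, G.OuterZero fun i => v i t
  bc_φ : ∀ t ∈ S, G.OuterZero fun i => deriv (φ i t)
  node_uv : ∀ t ∈ S, G.HypNode lam K (fun i => u i t) fun i => v i t
  node_φ : ∀ t ∈ S, G.ParNode D α fun i => φ i t

end Network

end

section Helpers
open Function
variable {f : ℝ → ℝ → ℝ}

lemma hasDerivAt_left (hf : ContDiff ℝ 1 (uncurry f)) (t x : ℝ) :
    HasDerivAt (fun s => f s x) (fderiv ℝ (uncurry f) (t, x) (1, 0)) t := by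
  have h1 : HasFDerivAt (uncurry f) (fderiv ℝ (uncurry f) (t, x)) (t, x) :=
    (hf.differentiable one_ne_zero (t, x)).hasFDerivAt
  have h2 : HasDerivAt (fun s : ℝ => ((s, x) : ℝ × ℝ)) ((1 : ℝ), (0 : ℝ)) t :=
    (hasDerivAt_id t).prodMk (hasDerivAt_const t x)
  exact h1.comp_hasDerivAt t h2

lemma hasDerivAt_right (hf : ContDiff ℝ 1 (uncurry f)) (t x : ℝ) :
    HasDerivAt (f t) (fderiv ℝ (uncurry f) (t, x) (0, 1)) x := by
  have h1 : HasFDerivAt (uncurry f) (fderiv ℝ (uncurry f) (t, x)) (t, x) :=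
    (hf.differentiable one_ne_zero (t, x)).hasFDerivAt
  have h2 : HasDerivAt (fun s : ℝ => ((t, s) : ℝ × ℝ)) ((0 : ℝ), (1 : ℝ)) x :=
    (hasDerivAt_const x t).prodMk (hasDerivAt_id x)
  exact h1.comp_hasDerivAt x h2

lemma pdt_eq (hf : ContDiff ℝ 1 (uncurry f)) (t x : ℝ) :
    pdt f t x = fderiv ℝ (uncurry f) (t, x) (1, 0) := (hasDerivAt_left hf t x).deriv

lemma pdx_eq (hf : ContDiff ℝ 1 (uncurry f)) (t x : ℝ) :
    pdx f t x = fderiv ℝ (uncurry f) (t, x) (0, 1) := (hasDerivAt_right hf t x).deriv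

lemma hasDerivAt_pdt (hf : ContDiff ℝ 1 (uncurry f)) (t x : ℝ) :
    HasDerivAt (fun s => f s x) (pdt f t x) t := by
  rw [pdt_eq hf]; exact hasDerivAt_left hf t x

lemma hasDerivAt_pdx (hf : ContDiff ℝ 1 (uncurry f)) (t x : ℝ) :
    HasDerivAt (f t) (pdx f t x) x := by
  rw [pdx_eq hf]; exact hasDerivAt_right hf t x

lemma continuous_pdt (hf : ContDiff ℝ 1 (uncurry f)) :
    Continuous fun p : ℝ × ℝ => pdt f p.1 p.2 := by
  have h : Continuous fun p : ℝ × ℝ => fderiv ℝ (uncurry f) p ((1 : ℝ), (0 : ℝ)) :=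
    (hf.continuous_fderiv one_ne_zero).clm_apply continuous_const
  exact h.congr fun p => (pdt_eq hf p.1 p.2).symm

lemma continuous_pdx (hf : ContDiff ℝ 1 (uncurry f)) :
    Continuous fun p : ℝ × ℝ => pdx f p.1 p.2 := by
  have h : Continuous fun p : ℝ × ℝ => fderiv ℝ (uncurry f) p ((0 : ℝ), (1 : ℝ)) :=
    (hf.continuous_fderiv one_ne_zero).clm_apply continuous_const
  exact h.congr fun p => (pdx_eq hf p.1 p.2).symm

lemma hasDerivAt_L2sq (hf : ContDiff ℝ 1 (uncurry f)) (ℓ t₀ : ℝ) :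
    HasDerivAt (fun t => L2sq ℓ (f t)) (∫ x in (0:ℝ)..ℓ, 2 * f t₀ x * pdt f t₀ x) t₀ := by
  have hgc : Continuous fun p : ℝ × ℝ => 2 * f p.1 p.2 * pdt f p.1 p.2 :=
    (continuous_const.mul hf.continuous).mul (continuous_pdt hf)
  obtain ⟨C, hC⟩ := (((isCompact_closedBall t₀ 1).prod isCompact_uIcc)).exists_bound_of_continuousOn
    hgc.continuousOn
  have key := intervalIntegral.hasDerivAt_integral_of_dominated_loc_of_deriv_le
    (F := fun t x => f t x ^ 2) (F' := fun t x => 2 * f t x * pdt f t x)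
    (x₀ := t₀) (a := 0) (b := ℓ) (μ := volume) (bound := fun _ => C) (Metric.ball_mem_nhds t₀ one_pos)
    ?_ ?_ ?_ ?_ ?_ ?_
  · exact key.2
  · filter_upwards with t
    exact ((hf.continuous.comp (Continuous.prodMk_right t)).pow 2).aestronglyMeasurable
  · exact ((hf.continuous.comp (Continuous.prodMk_right t₀)).pow 2).intervalIntegrable 0 ℓ
  · exact (hgc.comp (Continuous.prodMk_right t₀)).aestronglyMeasurable
  · filter_upwards with x hx t ht
    have hmem : ((t, x) : ℝ × ℝ) ∈ Metric.closedBall t₀ 1 ×ˢ Set.uIcc (0:ℝ) ℓ :=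
      ⟨Metric.ball_subset_closedBall ht, Set.Ioc_subset_Icc_self hx⟩
    exact hC (t, x) hmem
  · exact intervalIntegrable_const
  · filter_upwards with x hx t ht
    have h := (hasDerivAt_pdt hf t x).fun_pow 2
    simpa [mul_comm, mul_assoc, mul_left_comm] using h

lemma L2sq_nonneg {ℓ : ℝ} (hℓ : 0 ≤ ℓ) (g : ℝ → ℝ) : 0 ≤ L2sq ℓ g :=
  intervalIntegral.integral_nonneg hℓ fun x _ => sq_nonneg _

lemma sobolev_sq {g : ℝ → ℝ} (hg : ContDiff ℝ 1 g) {ℓ : ℝ} (hℓ : 0 < ℓ) {x : ℝ}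
    (hx : x ∈ Set.Icc 0 ℓ) :
    g x ^ 2 ≤ (1 / ℓ + 1) * (L2sq ℓ g + L2sq ℓ (deriv g)) := by
  have hgc : Continuous g := hg.continuous
  have hg'c : Continuous (deriv g) := hg.continuous_deriv le_rfl
  obtain ⟨y, hy, hmin⟩ := isCompact_Icc.exists_isMinOn ⟨0, Set.left_mem_Icc.2 hℓ.le⟩
    ((hgc.pow 2).continuousOn (s := Set.Icc 0 ℓ))
  -- min value bound
  have h1 : ℓ * g y ^ 2 ≤ L2sq ℓ g := by
    have := intervalIntegral.integral_mono_on (a := 0) (b := ℓ) (μ := volume)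
      (f := fun _ => g y ^ 2) (g := fun z => g z ^ 2) hℓ.le intervalIntegrable_const
      ((hgc.pow 2).intervalIntegrable 0 ℓ) (fun z hz => hmin hz)
    simpa [L2sq, smul_eq_mul] using this
  -- FTC for g²
  have hder : ∀ z : ℝ, HasDerivAt (fun w => g w ^ 2) (2 * g z * deriv g z) z := by
    intro z
    simpa [mul_comm, mul_assoc, mul_left_comm] using ((hg.differentiable one_ne_zero z).hasDerivAt).fun_pow 2
  have habs : ∀ z ∈ Set.Icc (0:ℝ) ℓ, |2 * g z * deriv g z| ≤ g z ^ 2 + deriv g z ^ 2 := by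
    intro z _
    have := two_mul_le_add_sq |g z| |deriv g z|
    calc |2 * g z * deriv g z| = 2 * |g z| * |deriv g z| := by
            rw [abs_mul, abs_mul]; simp [abs_of_nonneg]
      _ ≤ |g z| ^ 2 + |deriv g z| ^ 2 := by nlinarith
      _ = g z ^ 2 + deriv g z ^ 2 := by rw [sq_abs, sq_abs]
  have hint : IntervalIntegrable (fun z => |2 * g z * deriv g z|) volume 0 ℓ :=
    (((continuous_const.mul hgc).mul hg'c).abs).intervalIntegrable 0 ℓ
  have h4 : (∫ z in (0:ℝ)..ℓ, |2 * g z * deriv g z|) ≤ L2sq ℓ g + L2sq ℓ (deriv g) := by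
    have := intervalIntegral.integral_mono_on (a := 0) (b := ℓ) (μ := volume)
      (f := fun z => |2 * g z * deriv g z|) (g := fun z => g z ^ 2 + deriv g z ^ 2) hℓ.le hint
      (((hgc.pow 2).add (hg'c.pow 2)).intervalIntegrable 0 ℓ) habs
    exact this.trans_eq (intervalIntegral.integral_add ((hgc.pow 2).intervalIntegrable 0 ℓ)
      ((hg'c.pow 2).intervalIntegrable 0 ℓ))
  have h3 : g x ^ 2 ≤ g y ^ 2 + ∫ z in (0:ℝ)..ℓ, |2 * g z * deriv g z| := by
    have hintc : Continuous fun z => 2 * g z * deriv g z := (continuous_const.mul hgc).mul hg'c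
    have hftc : ∀ p q : ℝ, (∫ z in p..q, 2 * g z * deriv g z) = g q ^ 2 - g p ^ 2 := by
      intro p q
      exact intervalIntegral.integral_eq_sub_of_hasDerivAt (fun z _ => hder z)
        (hintc.intervalIntegrable p q)
    have hmono : ∀ p q : ℝ, 0 ≤ p → p ≤ q → q ≤ ℓ →
        (∫ z in p..q, |2 * g z * deriv g z|) ≤ ∫ z in (0:ℝ)..ℓ, |2 * g z * deriv g z| := by
      intro p q h0 hpq hql
      exact intervalIntegral.integral_mono_interval h0 hpq hql
        (Filter.Eventually.of_forall fun z => abs_nonneg _) hint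
    rcases le_total y x with hyx | hxy
    · have := hftc y x
      have hb : (∫ z in y..x, 2 * g z * deriv g z) ≤ ∫ z in y..x, |2 * g z * deriv g z| :=
        intervalIntegral.integral_mono_on hyx (hintc.intervalIntegrable y x)
          (hint.mono_set (by rw [Set.uIcc_of_le hyx, Set.uIcc_of_le hℓ.le]; exact Set.Icc_subset_Icc hy.1 hx.2))
          (fun z _ => le_abs_self _)
      have := hmono y x hy.1 hyx hx.2
      linarith [hftc y x, hb, this]
    · have hb : (∫ z in x..y, -(2 * g z * deriv g z)) ≤ ∫ z in x..y, |2 * g z * deriv g z| :=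
        intervalIntegral.integral_mono_on hxy ((hintc.neg).intervalIntegrable x y)
          (hint.mono_set (by rw [Set.uIcc_of_le hxy, Set.uIcc_of_le hℓ.le]; exact Set.Icc_subset_Icc hx.1 hy.2))
          (fun z _ => neg_le_abs _)
      have hneg : (∫ z in x..y, -(2 * g z * deriv g z)) = -(g y ^ 2 - g x ^ 2) := by
        rw [intervalIntegral.integral_neg, hftc x y]
      have := hmono x y hx.1 hxy hy.2
      linarith
  have hL2g := L2sq_nonneg hℓ.le g
  have hL2g' := L2sq_nonneg hℓ.le (deriv g)
  have hy2 : g y ^ 2 ≤ (1 / ℓ) * L2sq ℓ g := by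
    rw [div_mul_eq_mul_div, le_div_iff₀ hℓ]; linarith [h1]
  nlinarith [mul_nonneg (le_of_lt (by positivity : (0:ℝ) < 1/ℓ)) hL2g']

lemma continuous_L2sq_param {g : ℝ → ℝ → ℝ} (hg : Continuous (uncurry g)) (ℓ : ℝ) :
    Continuous fun t => L2sq ℓ (g t) := by
  have h : Continuous (uncurry fun t x => g t x ^ 2) := hg.pow 2
  exact intervalIntegral.continuous_parametric_intervalIntegral_of_continuous' h 0 ℓ

lemma continuous_param_integral {g : ℝ → ℝ → ℝ} (hg : Continuous (uncurry g)) (a b : ℝ) :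
    Continuous fun t => ∫ x in a..b, g t x :=
  intervalIntegral.continuous_parametric_intervalIntegral_of_continuous' hg a b

end Helpers

section NodeHelpers
open Function

lemma quad_nonneg {M : Type} (s : Finset M) (Kf : M → M → ℝ)
    (hsym : ∀ i j, Kf i j = Kf j i) (hnn : ∀ i j, 0 ≤ Kf i j) (x : M → ℝ) :
    0 ≤ ∑ i ∈ s, ∑ j ∈ s, Kf i j * (x i * (x i - x j)) := by
  have hswap : ∑ i ∈ s, ∑ j ∈ s, Kf i j * (x i * (x i - x j))
      = ∑ i ∈ s, ∑ j ∈ s, Kf i j * (x j * (x j - x i)) := by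
    rw [Finset.sum_comm]
    exact Finset.sum_congr rfl fun a _ => Finset.sum_congr rfl fun b _ => by rw [hsym]
  have h2 : (∑ i ∈ s, ∑ j ∈ s, Kf i j * (x i * (x i - x j))) * 2
      = ∑ i ∈ s, ∑ j ∈ s, Kf i j * (x i - x j) ^ 2 := by
    rw [mul_two]; nth_rewrite 2 [hswap]
    rw [← Finset.sum_add_distrib]
    refine Finset.sum_congr rfl fun i _ => ?_
    rw [← Finset.sum_add_distrib]
    exact Finset.sum_congr rfl fun j _ => by ring
  nlinarith [Finset.sum_nonneg (fun i (_ : i ∈ s) => Finset.sum_nonneg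
    fun j (_ : j ∈ s) => mul_nonneg (hnn i j) (sq_nonneg (x i - x j)))]

lemma boundary_nonneg {P M : Type} [Fintype P] [Fintype M] [DecidableEq P] [DecidableEq M]
    (G : Network P M) (lam : M → ℝ) (K : P → M → M → ℝ)
    (hKsym : ∀ ν i j, K ν i j = K ν j i) (hKnn : ∀ ν i j, 0 ≤ K ν i j)
    (U V : M → ℝ → ℝ) (hnode : G.HypNode lam K U V) (hout : G.OuterZero V) :
    0 ≤ ∑ i, lam i * (U i (G.len i) * V i (G.len i) - U i 0 * V i 0) := by
  classical
  set tr : P → M → ℝ := fun ν i => G.trace U ν i with htr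
  set S : P → M → ℝ := fun ν i => ∑ j ∈ G.incident ν, K ν i j * (tr ν j - tr ν i) with hS
  have hsplit : ∑ i, lam i * (U i (G.len i) * V i (G.len i) - U i 0 * V i 0)
      = (∑ i, lam i * (U i (G.len i) * V i (G.len i))) - ∑ i, lam i * (U i 0 * V i 0) := by
    rw [← Finset.sum_sub_distrib]
    exact Finset.sum_congr rfl fun i _ => by ring
  -- fiberwise decomposition of the two endpoint sums
  have hT1 : ∑ i, lam i * (U i (G.len i) * V i (G.len i))
      = ∑ ν : P, ∑ i ∈ Finset.univ.filter (fun i => G.last i = some ν),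
          lam i * (U i (G.len i) * V i (G.len i)) := by
    rw [← Finset.sum_fiberwise Finset.univ G.last
      (fun i => lam i * (U i (G.len i) * V i (G.len i))), Fintype.sum_option]
    have h0 : ∑ i ∈ Finset.univ.filter (fun i => G.last i = none),
        lam i * (U i (G.len i) * V i (G.len i)) = 0 := by
      refine Finset.sum_eq_zero fun i hi => ?_
      rw [(hout i).2 (Finset.mem_filter.1 hi).2]; ring
    rw [h0, zero_add]
  have hT2 : ∑ i, lam i * (U i 0 * V i 0)
      = ∑ ν : P, ∑ i ∈ Finset.univ.filter (fun i => G.first i = some ν),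
          lam i * (U i 0 * V i 0) := by
    rw [← Finset.sum_fiberwise Finset.univ G.first (fun i => lam i * (U i 0 * V i 0)),
      Fintype.sum_option]
    have h0 : ∑ i ∈ Finset.univ.filter (fun i => G.first i = none),
        lam i * (U i 0 * V i 0) = 0 := by
      refine Finset.sum_eq_zero fun i hi => ?_
      rw [(hout i).1 (Finset.mem_filter.1 hi).2]; ring
    rw [h0, zero_add]
  rw [hsplit, hT1, hT2, ← Finset.sum_sub_distrib]
  refine Finset.sum_nonneg fun ν _ => ?_
  -- per-node computation
  have hAl : ∑ i ∈ Finset.univ.filter (fun i => G.last i = some ν),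
      lam i * (U i (G.len i) * V i (G.len i))
      = ∑ i ∈ Finset.univ.filter (fun i => G.last i = some ν), -(tr ν i * S ν i) := by
    refine Finset.sum_congr rfl fun i hi => ?_
    have hlast : G.last i = some ν := (Finset.mem_filter.1 hi).2
    have hinc : i ∈ G.incident ν := Finset.mem_filter.2 ⟨Finset.mem_univ _, Or.inr hlast⟩
    have h := (hnode ν).1 i hinc hlast
    have htri : tr ν i = U i (G.len i) := by simp [htr, Network.trace, hlast]
    have hSv : S ν i = ∑ j ∈ G.incident ν, K ν i j * (G.trace U ν j - G.trace U ν i) := rfl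
    rw [htri]
    have h2 : lam i * V i (G.len i) = -(S ν i) := by rw [hSv]; linarith [h]
    calc lam i * (U i (G.len i) * V i (G.len i))
        = U i (G.len i) * (lam i * V i (G.len i)) := by ring
      _ = -(U i (G.len i) * S ν i) := by rw [h2]; ring
  have hA0 : ∑ i ∈ Finset.univ.filter (fun i => G.first i = some ν),
      lam i * (U i 0 * V i 0)
      = ∑ i ∈ Finset.univ.filter (fun i => G.first i = some ν), tr ν i * S ν i := by
    refine Finset.sum_congr rfl fun i hi => ?_
    have hfirst : G.first i = some ν := (Finset.mem_filter.1 hi).2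
    have hinc : i ∈ G.incident ν := Finset.mem_filter.2 ⟨Finset.mem_univ _, Or.inl hfirst⟩
    have h := (hnode ν).2 i hinc hfirst
    have hnl : ¬ (G.last i = some ν) := fun hl => G.no_loop i ν ⟨hfirst, hl⟩
    have htri : tr ν i = U i 0 := by simp [htr, Network.trace, hnl]
    have hSv : S ν i = ∑ j ∈ G.incident ν, K ν i j * (G.trace U ν j - G.trace U ν i) := rfl
    rw [htri]
    have h2 : lam i * V i 0 = S ν i := by rw [hSv]; linarith [h]
    calc lam i * (U i 0 * V i 0) = U i 0 * (lam i * V i 0) := by ring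
      _ = U i 0 * S ν i := by rw [h2]
  rw [hAl, hA0]
  have hdisj : Disjoint (Finset.univ.filter (fun i => G.last i = some ν))
      (Finset.univ.filter (fun i => G.first i = some ν)) := by
    rw [Finset.disjoint_left]
    intro i hi hj
    exact G.no_loop i ν ⟨(Finset.mem_filter.1 hj).2, (Finset.mem_filter.1 hi).2⟩
  have hunion : G.incident ν = (Finset.univ.filter (fun i => G.last i = some ν))
      ∪ (Finset.univ.filter (fun i => G.first i = some ν)) := by
    rw [← Finset.filter_or]
    simp only [Network.incident]
    exact Finset.filter_congr fun i _ => by tauto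
  have hkey : (∑ i ∈ Finset.univ.filter (fun i => G.last i = some ν), -(tr ν i * S ν i))
      - ∑ i ∈ Finset.univ.filter (fun i => G.first i = some ν), tr ν i * S ν i
      = ∑ i ∈ G.incident ν, -(tr ν i * S ν i) := by
    rw [hunion, Finset.sum_union hdisj]
    simp only [Finset.sum_neg_distrib]
    ring
  rw [hkey]
  have hexp : ∑ i ∈ G.incident ν, -(tr ν i * S ν i)
      = ∑ i ∈ G.incident ν, ∑ j ∈ G.incident ν, K ν i j * (tr ν i * (tr ν i - tr ν j)) := by
    refine Finset.sum_congr rfl fun i _ => ?_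
    have hSv : S ν i = ∑ j ∈ G.incident ν, K ν i j * (tr ν j - tr ν i) := rfl
    rw [hSv, Finset.mul_sum, ← Finset.sum_neg_distrib]
    exact Finset.sum_congr rfl fun j _ => by ring
  rw [hexp]
  exact quad_nonneg _ _ (fun i j => hKsym ν i j) (fun i j => hKnn ν i j) _

end NodeHelpers

/-- **A priori `L²` estimate for `(u, v)` (Proposition 5.1).**
For any local (classical) solution of the chemotaxis system on the network `G`
on a time interval `[0, T]`, one has
`∑_i ( sup_{[0,T]} ‖u_i(t)‖₂² + sup_{[0,T]} ‖v_i(t)‖₂² + β_i ∫₀ᵀ ‖v_i(t)‖₂² dt )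
  ≤ C ∑_i ( ‖u_{i0}‖₂² + ‖v_{i0}‖₂²
      + sup_{[0,T]} ‖u_i(t)‖_{H¹} ∫₀ᵀ (‖∂_x φ_i(t)‖₂² + ‖v_i(t)‖₂²) dt )`,
where `C > 0` depends only on the parameters of the problem. -/
theorem apriori_L2_estimate
    {P M : Type} [Fintype P] [Fintype M] [DecidableEq P] [DecidableEq M]
    (G : Network P M) (lam beta D : M → ℝ) (a b : ℝ) (K α : P → M → M → ℝ)
    (hlam : ∀ i, 0 ≤ lam i) (hbeta : ∀ i, 0 < beta i) (hD : ∀ i, 0 < D i)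
    (ha : 0 ≤ a) (hb : 0 < b)
    (hKsym : ∀ ν i j, K ν i j = K ν j i) (hKnn : ∀ ν i j, 0 ≤ K ν i j)
    (hαsym : ∀ ν i j, α ν i j = α ν j i) (hαnn : ∀ ν i j, 0 ≤ α ν i j)
    :
    ∃ C > 0, ∀ T > 0, ∀ u v φ : M → ℝ → ℝ → ℝ,
      G.IsSolution lam beta D a b K α (Set.Icc 0 T) u v φ →
      ∑ i, (supIcc T (fun t => L2sq (G.len i) (u i t))
          + supIcc T (fun t => L2sq (G.len i) (v i t))
          + beta i * ∫ t in (0:ℝ)..T, L2sq (G.len i) (v i t)) ≤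
      C * ∑ i, (L2sq (G.len i) (u i 0) + L2sq (G.len i) (v i 0)
          + supIcc T (fun t => H1n (G.len i) (u i t))
            * ∫ t in (0:ℝ)..T,
                (L2sq (G.len i) (deriv (φ i t)) + L2sq (G.len i) (v i t))) := by
  classical
  set c : M → ℝ := fun i => Real.sqrt (1 / G.len i + 1) with hc
  have hcnn : ∀ i, 0 ≤ c i := fun i => Real.sqrt_nonneg _
  set Dc : ℝ := 1 + ∑ i, c i with hDc
  have hDc1 : (1:ℝ) ≤ Dc := le_add_of_nonneg_right (Finset.sum_nonneg fun i _ => hcnn i)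
  have hcD : ∀ i, c i ≤ Dc := fun i =>
    (Finset.single_le_sum (fun j _ => hcnn j) (Finset.mem_univ i)).trans
      (le_add_of_nonneg_left zero_le_one)
  have hcard : (0:ℝ) ≤ 3 * (Fintype.card M : ℝ) := by positivity
  refine ⟨3 * (Fintype.card M : ℝ) * Dc + 1, by nlinarith, ?_⟩
  intro T hT u v φ hsol
  have hu1 : ∀ i, ContDiff ℝ 1 (Function.uncurry (u i)) := hsol.reg_u
  have hv1 : ∀ i, ContDiff ℝ 1 (Function.uncurry (v i)) := hsol.reg_v
  have hφ1 : ∀ i, ContDiff ℝ 1 (Function.uncurry (φ i)) := fun i =>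
    (hsol.reg_φ i).of_le one_le_two
  have hℓ : ∀ i, 0 < G.len i := G.len_pos
  -- abbreviations
  set Eu : M → ℝ → ℝ := fun i t => L2sq (G.len i) (u i t) with hEu
  set Ev : M → ℝ → ℝ := fun i t => L2sq (G.len i) (v i t) with hEv
  set Eφ : M → ℝ → ℝ := fun i t => L2sq (G.len i) (deriv (φ i t)) with hEφ
  set E : ℝ → ℝ := fun t => ∑ i, (Eu i t + Ev i t) with hE
  set E' : ℝ → ℝ := fun t => ∑ i,
    ((∫ x in (0:ℝ)..G.len i, 2 * u i t x * pdt (u i) t x)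
      + ∫ x in (0:ℝ)..G.len i, 2 * v i t x * pdt (v i) t x) with hE'
  set B : ℝ → ℝ := fun t =>
    ∑ i, lam i * (u i t (G.len i) * v i t (G.len i) - u i t 0 * v i t 0) with hB
  set R : ℝ → ℝ := fun t =>
    ∑ i, ∫ x in (0:ℝ)..G.len i, 2 * u i t x * (v i t x * deriv (φ i t) x) with hR
  set Su : M → ℝ := fun i => supIcc T (fun t => H1n (G.len i) (u i t)) with hSu
  set Q : M → ℝ := fun i => ∫ t in (0:ℝ)..T, (Eφ i t + Ev i t) with hQ
  -- continuity facts
  have contEu : ∀ i, Continuous (Eu i) := fun i =>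
    continuous_L2sq_param (hu1 i).continuous (G.len i)
  have contEv : ∀ i, Continuous (Ev i) := fun i =>
    continuous_L2sq_param (hv1 i).continuous (G.len i)
  have contEφ : ∀ i, Continuous (Eφ i) := fun i =>
    continuous_L2sq_param (g := fun t x => pdx (φ i) t x) (continuous_pdx (hφ1 i)) (G.len i)
  have contEux : ∀ i, Continuous fun t => L2sq (G.len i) (deriv (u i t)) := fun i =>
    continuous_L2sq_param (g := fun t x => pdx (u i) t x) (continuous_pdx (hu1 i)) (G.len i)
  have contH1 : ∀ i, Continuous fun t => H1n (G.len i) (u i t) := fun i =>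
    Real.continuous_sqrt.comp ((contEu i).add (contEux i))
  have contE' : Continuous E' := by
    rw [hE']
    refine continuous_finset_sum _ fun i _ => Continuous.add ?_ ?_
    · exact continuous_param_integral (g := fun t x => 2 * u i t x * pdt (u i) t x)
        ((continuous_const.fun_mul (hu1 i).continuous).fun_mul (continuous_pdt (hu1 i))) 0 (G.len i)
    · exact continuous_param_integral (g := fun t x => 2 * v i t x * pdt (v i) t x)
        ((continuous_const.fun_mul (hv1 i).continuous).fun_mul (continuous_pdt (hv1 i))) 0 (G.len i)
  have contuℓ : ∀ i (y : ℝ), Continuous fun t => u i t y := fun i y =>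
    (hu1 i).continuous.comp (continuous_id.prodMk continuous_const)
  have contvℓ : ∀ i (y : ℝ), Continuous fun t => v i t y := fun i y =>
    (hv1 i).continuous.comp (continuous_id.prodMk continuous_const)
  have contB : Continuous B := by
    rw [hB]
    refine continuous_finset_sum _ fun i _ => Continuous.mul continuous_const ?_
    exact (((contuℓ i _).mul (contvℓ i _)).sub ((contuℓ i 0).mul (contvℓ i 0)))
  have contR : Continuous R := by
    rw [hR]
    refine continuous_finset_sum _ fun i _ => ?_
    exact continuous_param_integral
      ((continuous_const.fun_mul (hu1 i).continuous).fun_mul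
        ((hv1 i).continuous.fun_mul (continuous_pdx (hφ1 i)))) 0 (G.len i)
  -- nonnegativity facts
  have hEunn : ∀ i t, 0 ≤ Eu i t := fun i t => L2sq_nonneg (hℓ i).le _
  have hEvnn : ∀ i t, 0 ≤ Ev i t := fun i t => L2sq_nonneg (hℓ i).le _
  have hEφnn : ∀ i t, 0 ≤ Eφ i t := fun i t => L2sq_nonneg (hℓ i).le _
  have hEnn : ∀ t, 0 ≤ E t := fun t =>
    Finset.sum_nonneg fun i _ => add_nonneg (hEunn i t) (hEvnn i t)
  have hSunn : ∀ i, 0 ≤ Su i := fun i => Real.sSup_nonneg (by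
    rintro x ⟨t, _, rfl⟩; exact Real.sqrt_nonneg _)
  have hQnn : ∀ i, 0 ≤ Q i := fun i =>
    intervalIntegral.integral_nonneg hT.le fun t _ => add_nonneg (hEφnn i t) (hEvnn i t)
  -- derivative of the energy
  have haE : ∀ t, HasDerivAt E (E' t) t := by
    intro t
    rw [hE, hE']
    exact HasDerivAt.fun_sum fun i _ =>
      (hasDerivAt_L2sq (hu1 i) (G.len i) t).fun_add (hasDerivAt_L2sq (hv1 i) (G.len i) t)
  -- per-arc energy identity
  have harc : ∀ i, ∀ t ∈ Set.Icc (0:ℝ) T,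
      ((∫ x in (0:ℝ)..G.len i, 2 * u i t x * pdt (u i) t x)
        + ∫ x in (0:ℝ)..G.len i, 2 * v i t x * pdt (v i) t x)
      = -2 * (lam i * (u i t (G.len i) * v i t (G.len i) - u i t 0 * v i t 0))
        - 2 * beta i * Ev i t
        + ∫ x in (0:ℝ)..G.len i, 2 * u i t x * (v i t x * deriv (φ i t) x) := by
    intro i t ht
    have hl : (0:ℝ) ≤ G.len i := (hℓ i).le
    have hIcc : Set.uIcc (0:ℝ) (G.len i) = Set.Icc 0 (G.len i) := Set.uIcc_of_le hl
    have hcu : Continuous (u i t) := (hu1 i).continuous.comp (Continuous.prodMk_right t)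
    have hcv : Continuous (v i t) := (hv1 i).continuous.comp (Continuous.prodMk_right t)
    have hcux : Continuous fun x => pdx (u i) t x :=
      (continuous_pdx (hu1 i)).comp (Continuous.prodMk_right t)
    have hcvx : Continuous fun x => pdx (v i) t x :=
      (continuous_pdx (hv1 i)).comp (Continuous.prodMk_right t)
    have hcφx : Continuous fun x => deriv (φ i t) x :=
      (continuous_pdx (hφ1 i)).comp (Continuous.prodMk_right t)
    have h1 : (∫ x in (0:ℝ)..G.len i, 2 * u i t x * pdt (u i) t x)
        = ∫ x in (0:ℝ)..G.len i, (-(2 * lam i)) * (u i t x * pdx (v i) t x) := by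
      refine intervalIntegral.integral_congr fun x hx => ?_
      rw [hIcc] at hx
      have h := hsol.eq_u i t ht x hx
      have hp : pdt (u i) t x = -(lam i * pdx (v i) t x) := by linarith
      rw [hp]; ring
    have h2 : (∫ x in (0:ℝ)..G.len i, 2 * v i t x * pdt (v i) t x)
        = ∫ x in (0:ℝ)..G.len i, ((-(2 * lam i)) * (pdx (u i) t x * v i t x)
            + (2 * u i t x * (v i t x * deriv (φ i t) x) - 2 * beta i * v i t x ^ 2)) := by
      refine intervalIntegral.integral_congr fun x hx => ?_
      rw [hIcc] at hx
      have h := hsol.eq_v i t ht x hx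
      have hp : pdt (v i) t x = u i t x * pdx (φ i) t x - beta i * v i t x
          - lam i * pdx (u i) t x := by linarith
      rw [hp]
      show 2 * v i t x * _ = _ + (2 * u i t x * (v i t x * pdx (φ i) t x) - _)
      ring
    have hiA : IntervalIntegrable (fun x => (-(2 * lam i)) * (pdx (u i) t x * v i t x))
        volume 0 (G.len i) :=
      (continuous_const.mul (hcux.mul hcv)).intervalIntegrable _ _
    have hiB : IntervalIntegrable
        (fun x => 2 * u i t x * (v i t x * deriv (φ i t) x) - 2 * beta i * v i t x ^ 2)
        volume 0 (G.len i) :=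
      (((continuous_const.mul hcu).mul (hcv.mul hcφx)).sub
        ((continuous_const.mul (hcv.pow 2)))).intervalIntegrable _ _
    have hiC : IntervalIntegrable (fun x => 2 * u i t x * (v i t x * deriv (φ i t) x))
        volume 0 (G.len i) :=
      ((continuous_const.mul hcu).mul (hcv.mul hcφx)).intervalIntegrable _ _
    have hiD : IntervalIntegrable (fun x => 2 * beta i * v i t x ^ 2) volume 0 (G.len i) :=
      (continuous_const.mul (hcv.pow 2)).intervalIntegrable _ _
    have hiE : IntervalIntegrable (fun x => u i t x * pdx (v i) t x) volume 0 (G.len i) :=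
      (hcu.mul hcvx).intervalIntegrable _ _
    have hiF : IntervalIntegrable (fun x => pdx (u i) t x * v i t x) volume 0 (G.len i) :=
      (hcux.mul hcv).intervalIntegrable _ _
    -- FTC in space for the product u*v
    have hftc : (∫ x in (0:ℝ)..G.len i, (pdx (u i) t x * v i t x + u i t x * pdx (v i) t x))
        = u i t (G.len i) * v i t (G.len i) - u i t 0 * v i t 0 := by
      refine intervalIntegral.integral_eq_sub_of_hasDerivAt (f := fun x => u i t x * v i t x) (fun x _ => ?_) ?_
      · exact (hasDerivAt_pdx (hu1 i) t x).mul (hasDerivAt_pdx (hv1 i) t x)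
      · exact ((hcux.mul hcv).add (hcu.mul hcvx)).intervalIntegrable _ _
    have hsplit : (∫ x in (0:ℝ)..G.len i, 2 * u i t x * pdt (u i) t x)
        + (∫ x in (0:ℝ)..G.len i, 2 * v i t x * pdt (v i) t x)
        = (-(2 * lam i)) * (∫ x in (0:ℝ)..G.len i,
            (pdx (u i) t x * v i t x + u i t x * pdx (v i) t x))
          + ((∫ x in (0:ℝ)..G.len i, 2 * u i t x * (v i t x * deriv (φ i t) x))
            - 2 * beta i * Ev i t) := by
      rw [h1, h2, intervalIntegral.integral_add hiA hiB,
        intervalIntegral.integral_sub hiC hiD, intervalIntegral.integral_add hiF hiE,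
        intervalIntegral.integral_const_mul, intervalIntegral.integral_const_mul,
        intervalIntegral.integral_const_mul]
      have hEvi : Ev i t = ∫ x in (0:ℝ)..G.len i, v i t x ^ 2 := rfl
      rw [hEvi]; ring
    rw [hsplit, hftc]; ring
  -- identity for E'
  have hident : ∀ t ∈ Set.Icc (0:ℝ) T,
      E' t = -2 * B t - 2 * (∑ i, beta i * Ev i t) + R t := by
    intro t ht
    rw [hE', hB, hR]
    calc (∑ i, ((∫ x in (0:ℝ)..G.len i, 2 * u i t x * pdt (u i) t x)
          + ∫ x in (0:ℝ)..G.len i, 2 * v i t x * pdt (v i) t x))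
        = ∑ i, (-2 * (lam i * (u i t (G.len i) * v i t (G.len i) - u i t 0 * v i t 0))
            - 2 * beta i * Ev i t
            + ∫ x in (0:ℝ)..G.len i, 2 * u i t x * (v i t x * deriv (φ i t) x)) :=
          Finset.sum_congr rfl fun i _ => harc i t ht
      _ = -2 * (∑ i, lam i * (u i t (G.len i) * v i t (G.len i) - u i t 0 * v i t 0))
            - 2 * (∑ i, beta i * Ev i t)
            + ∑ i, ∫ x in (0:ℝ)..G.len i, 2 * u i t x * (v i t x * deriv (φ i t) x) := by
          rw [Finset.mul_sum, Finset.mul_sum, ← Finset.sum_sub_distrib,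
            ← Finset.sum_add_distrib]
          exact Finset.sum_congr rfl fun i _ => by ring
  -- boundary term sign
  have hBnn : ∀ t ∈ Set.Icc (0:ℝ) T, 0 ≤ B t := by
    intro t ht
    rw [hB]
    exact boundary_nonneg G lam K hKsym hKnn (fun i => u i t) (fun i => v i t)
      (hsol.node_uv t ht) (hsol.bc_v t ht)
  -- pointwise Sobolev bound for u
  have husup : ∀ i, ∀ t ∈ Set.Icc (0:ℝ) T, ∀ x ∈ Set.Icc 0 (G.len i),
      |u i t x| ≤ c i * Su i := by
    intro i t ht x hx
    have hcx : ContDiff ℝ 1 (u i t) :=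
      (hu1 i).comp ((contDiff_const (c := t)).prodMk contDiff_id)
    have hsob := sobolev_sq hcx (hℓ i) hx
    have hH1nn : 0 ≤ L2sq (G.len i) (u i t) + L2sq (G.len i) (deriv (u i t)) :=
      add_nonneg (L2sq_nonneg (hℓ i).le _) (L2sq_nonneg (hℓ i).le _)
    have hfac : (0:ℝ) ≤ 1 / G.len i + 1 :=
      add_nonneg (div_nonneg zero_le_one (hℓ i).le) zero_le_one
    have hle : H1n (G.len i) (u i t) ≤ Su i := by
      have bdd : BddAbove ((fun s => H1n (G.len i) (u i s)) '' Set.Icc 0 T) :=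
        (isCompact_Icc.image (contH1 i)).bddAbove
      exact le_csSup bdd ⟨t, ht, rfl⟩
    calc |u i t x| = Real.sqrt (u i t x ^ 2) := (Real.sqrt_sq_eq_abs _).symm
      _ ≤ Real.sqrt ((1 / G.len i + 1) *
            (L2sq (G.len i) (u i t) + L2sq (G.len i) (deriv (u i t)))) :=
          Real.sqrt_le_sqrt hsob
      _ = c i * Real.sqrt (L2sq (G.len i) (u i t) + L2sq (G.len i) (deriv (u i t))) :=
          Real.sqrt_mul hfac _
      _ = c i * H1n (G.len i) (u i t) := rfl
      _ ≤ c i * Su i := mul_le_mul_of_nonneg_left hle (hcnn i)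
  -- bound for R
  have hRbound : ∀ t ∈ Set.Icc (0:ℝ) T, |R t| ≤ ∑ i, c i * Su i * (Eφ i t + Ev i t) := by
    intro t ht
    rw [hR]
    refine (Finset.abs_sum_le_sum_abs _ _).trans (Finset.sum_le_sum fun i _ => ?_)
    have hl : (0:ℝ) ≤ G.len i := (hℓ i).le
    have hcu : Continuous (u i t) := (hu1 i).continuous.comp (Continuous.prodMk_right t)
    have hcv : Continuous (v i t) := (hv1 i).continuous.comp (Continuous.prodMk_right t)
    have hcφx : Continuous fun x => deriv (φ i t) x :=
      (continuous_pdx (hφ1 i)).comp (Continuous.prodMk_right t)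
    have hint : Continuous fun x => 2 * u i t x * (v i t x * deriv (φ i t) x) :=
      (continuous_const.mul hcu).mul (hcv.mul hcφx)
    have h1 : |∫ x in (0:ℝ)..G.len i, 2 * u i t x * (v i t x * deriv (φ i t) x)|
        ≤ ∫ x in (0:ℝ)..G.len i, |2 * u i t x * (v i t x * deriv (φ i t) x)| :=
      intervalIntegral.abs_integral_le_integral_abs hl
    have h2 : (∫ x in (0:ℝ)..G.len i, |2 * u i t x * (v i t x * deriv (φ i t) x)|)
        ≤ ∫ x in (0:ℝ)..G.len i, c i * Su i * (deriv (φ i t) x ^ 2 + v i t x ^ 2) := by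
      refine intervalIntegral.integral_mono_on hl (hint.abs.intervalIntegrable _ _)
        ((continuous_const.mul ((hcφx.pow 2).add (hcv.pow 2))).intervalIntegrable _ _)
        fun x hx => ?_
      have hu := husup i t ht x hx
      have hvφ : 2 * |v i t x| * |deriv (φ i t) x| ≤ deriv (φ i t) x ^ 2 + v i t x ^ 2 := by
        nlinarith [sq_abs (v i t x), sq_abs (deriv (φ i t) x),
          sq_nonneg (|v i t x| - |deriv (φ i t) x|)]
      have habs : |2 * u i t x * (v i t x * deriv (φ i t) x)|
          = |u i t x| * (2 * |v i t x| * |deriv (φ i t) x|) := by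
        rw [abs_mul, abs_mul, abs_mul]
        rw [abs_of_nonneg (by norm_num : (0:ℝ) ≤ 2)]
        ring
      rw [habs]
      calc |u i t x| * (2 * |v i t x| * |deriv (φ i t) x|)
          ≤ (c i * Su i) * (deriv (φ i t) x ^ 2 + v i t x ^ 2) := by
            refine mul_le_mul hu hvφ ?_ (mul_nonneg (hcnn i) (hSunn i))
            positivity
        _ = c i * Su i * (deriv (φ i t) x ^ 2 + v i t x ^ 2) := rfl
    have h3 : (∫ x in (0:ℝ)..G.len i, c i * Su i * (deriv (φ i t) x ^ 2 + v i t x ^ 2))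
        = c i * Su i * (Eφ i t + Ev i t) := by
      rw [intervalIntegral.integral_const_mul,
        intervalIntegral.integral_add ((hcφx.fun_pow 2).intervalIntegrable _ _)
          ((hcv.fun_pow 2).intervalIntegrable _ _)]
      rfl
    calc |∫ x in (0:ℝ)..G.len i, 2 * u i t x * (v i t x * deriv (φ i t) x)|
        ≤ ∫ x in (0:ℝ)..G.len i, |2 * u i t x * (v i t x * deriv (φ i t) x)| := h1
      _ ≤ ∫ x in (0:ℝ)..G.len i, c i * Su i * (deriv (φ i t) x ^ 2 + v i t x ^ 2) := h2
      _ = c i * Su i * (Eφ i t + Ev i t) := h3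
  -- main integral inequality
  have key : ∀ t ∈ Set.Icc (0:ℝ) T,
      E t + 2 * ∑ i, beta i * ∫ s in (0:ℝ)..t, Ev i s ≤ E 0 + ∑ i, c i * Su i * Q i := by
    intro t ht
    obtain ⟨ht0, htT⟩ := ht
    have hEint : E t - E 0 = ∫ s in (0:ℝ)..t, E' s :=
      (intervalIntegral.integral_eq_sub_of_hasDerivAt (fun s _ => haE s)
        (contE'.intervalIntegrable 0 t)).symm
    have contSum : Continuous fun s => ∑ i, beta i * Ev i s :=
      continuous_finset_sum _ fun i _ => continuous_const.mul (contEv i)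
    have hc1 : Continuous fun s => -2 * B s + R s :=
      (continuous_const.mul contB).add contR
    have hc2 : Continuous fun s => 2 * ∑ i, beta i * Ev i s :=
      continuous_const.mul contSum
    have hcongr : (∫ s in (0:ℝ)..t, E' s)
        = ∫ s in (0:ℝ)..t, ((-2 * B s + R s) - 2 * ∑ i, beta i * Ev i s) := by
      refine intervalIntegral.integral_congr fun s hs => ?_
      rw [Set.uIcc_of_le ht0] at hs
      rw [hident s ⟨hs.1, hs.2.trans htT⟩]; ring
    have hsplit : (∫ s in (0:ℝ)..t, ((-2 * B s + R s) - 2 * ∑ i, beta i * Ev i s))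
        = (∫ s in (0:ℝ)..t, (-2 * B s + R s))
          - 2 * ∑ i, beta i * ∫ s in (0:ℝ)..t, Ev i s := by
      rw [intervalIntegral.integral_sub (hc1.intervalIntegrable _ _)
        (hc2.intervalIntegrable _ _), intervalIntegral.integral_const_mul,
        intervalIntegral.integral_finset_sum
          (fun i _ => (continuous_const.fun_mul (contEv i)).intervalIntegrable _ _)]
      congr 2
      exact Finset.sum_congr rfl fun i _ => intervalIntegral.integral_const_mul _ _
    have hb1 : (∫ s in (0:ℝ)..t, (-2 * B s + R s)) ≤ ∫ s in (0:ℝ)..t, |R s| := by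
      refine intervalIntegral.integral_mono_on ht0 (hc1.intervalIntegrable _ _)
        (contR.abs.intervalIntegrable _ _) fun s hs => ?_
      have hBs := hBnn s ⟨hs.1, hs.2.trans htT⟩
      have := le_abs_self (R s)
      linarith
    have hb2 : (∫ s in (0:ℝ)..t, |R s|) ≤ ∫ s in (0:ℝ)..T, |R s| :=
      intervalIntegral.integral_mono_interval le_rfl ht0 htT
        (Filter.Eventually.of_forall fun s => abs_nonneg _)
        (contR.abs.intervalIntegrable _ _)
    have hb3 : (∫ s in (0:ℝ)..T, |R s|) ≤ ∑ i, c i * Su i * Q i := by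
      have hmono : (∫ s in (0:ℝ)..T, |R s|)
          ≤ ∫ s in (0:ℝ)..T, ∑ i, c i * Su i * (Eφ i s + Ev i s) := by
        refine intervalIntegral.integral_mono_on hT.le
          (contR.abs.intervalIntegrable _ _)
          ((continuous_finset_sum _ fun i _ =>
            continuous_const.mul ((contEφ i).add (contEv i))).intervalIntegrable _ _)
          fun s hs => hRbound s hs
      refine hmono.trans (le_of_eq ?_)
      rw [intervalIntegral.integral_finset_sum
        (fun i _ => (continuous_const.fun_mul ((contEφ i).fun_add (contEv i))).intervalIntegrable _ _)]
      refine Finset.sum_congr rfl fun i _ => ?_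
      rw [intervalIntegral.integral_const_mul]
    have hEq : E t + 2 * ∑ i, beta i * ∫ s in (0:ℝ)..t, Ev i s
        = E 0 + ∫ s in (0:ℝ)..t, (-2 * B s + R s) := by
      rw [hcongr, hsplit] at hEint; linarith
    rw [hEq]
    have := hb1.trans (hb2.trans hb3)
    linarith
  -- conclusion
  set RHS0 : ℝ := E 0 + ∑ i, c i * Su i * Q i with hRHS0
  have hRHS0nn : 0 ≤ RHS0 := add_nonneg (hEnn 0)
    (Finset.sum_nonneg fun i _ => mul_nonneg (mul_nonneg (hcnn i) (hSunn i)) (hQnn i))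
  have hEle : ∀ t ∈ Set.Icc (0:ℝ) T, E t ≤ RHS0 := by
    intro t ht
    have hk := key t ht
    have h2 : 0 ≤ ∑ i, beta i * ∫ s in (0:ℝ)..t, Ev i s :=
      Finset.sum_nonneg fun i _ => mul_nonneg (hbeta i).le
        (intervalIntegral.integral_nonneg ht.1 fun s _ => hEvnn i s)
    rw [hRHS0]; linarith
  have hfin1 : ∀ i, supIcc T (fun t => L2sq (G.len i) (u i t)) ≤ RHS0 := by
    intro i
    refine Real.sSup_le ?_ hRHS0nn
    rintro x ⟨t, ht, rfl⟩
    have e1 : Eu i t = L2sq (G.len i) (u i t) := by rw [hEu]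
    have h1 : Eu i t + Ev i t ≤ E t := by
      simp only [hE]
      exact Finset.single_le_sum
        (fun j (_ : j ∈ Finset.univ) => add_nonneg (hEunn j t) (hEvnn j t)) (Finset.mem_univ i)
    have h2 := hEle t ht
    have h3 := hEvnn i t
    show L2sq (G.len i) (u i t) ≤ RHS0
    linarith
  have hfin2 : ∀ i, supIcc T (fun t => L2sq (G.len i) (v i t)) ≤ RHS0 := by
    intro i
    refine Real.sSup_le ?_ hRHS0nn
    rintro x ⟨t, ht, rfl⟩
    have e1 : Ev i t = L2sq (G.len i) (v i t) := by rw [hEv]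
    have h1 : Eu i t + Ev i t ≤ E t := by
      simp only [hE]
      exact Finset.single_le_sum
        (fun j (_ : j ∈ Finset.univ) => add_nonneg (hEunn j t) (hEvnn j t)) (Finset.mem_univ i)
    have h2 := hEle t ht
    have h3 := hEunn i t
    show L2sq (G.len i) (v i t) ≤ RHS0
    linarith
  have hfin3 : ∀ i, beta i * (∫ t in (0:ℝ)..T, L2sq (G.len i) (v i t)) ≤ RHS0 := by
    intro i
    have hk := key T ⟨hT.le, le_refl T⟩
    have e1 : (∫ t in (0:ℝ)..T, L2sq (G.len i) (v i t)) = ∫ t in (0:ℝ)..T, Ev i t := by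
      simp only [hEv]
    have hterms : ∀ j, (0:ℝ) ≤ beta j * ∫ s in (0:ℝ)..T, Ev j s := fun j =>
      mul_nonneg (hbeta j).le (intervalIntegral.integral_nonneg hT.le fun s _ => hEvnn j s)
    have h1 : beta i * (∫ s in (0:ℝ)..T, Ev i s) ≤ ∑ j, beta j * ∫ s in (0:ℝ)..T, Ev j s :=
      Finset.single_le_sum (fun j _ => hterms j) (Finset.mem_univ i)
    have h2 : 0 ≤ ∑ j, beta j * ∫ s in (0:ℝ)..T, Ev j s :=
      Finset.sum_nonneg fun j _ => hterms j
    have h3 := hEnn T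
    rw [e1, hRHS0]; rw [hRHS0] at hk
    linarith
  have eSig : ∑ i, (L2sq (G.len i) (u i 0) + L2sq (G.len i) (v i 0)
        + supIcc T (fun t => H1n (G.len i) (u i t))
          * ∫ t in (0:ℝ)..T,
              (L2sq (G.len i) (deriv (φ i t)) + L2sq (G.len i) (v i t)))
      = ∑ i, (Eu i 0 + Ev i 0 + Su i * Q i) := by
    simp only [hEu, hEv, hEφ, hSu, hQ]
  have hSignn : 0 ≤ ∑ i, (Eu i 0 + Ev i 0 + Su i * Q i) :=
    Finset.sum_nonneg fun i _ => add_nonneg (add_nonneg (hEunn i 0) (hEvnn i 0))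
      (mul_nonneg (hSunn i) (hQnn i))
  have hRHS0le : RHS0 ≤ Dc * ∑ i, (Eu i 0 + Ev i 0 + Su i * Q i) := by
    rw [hRHS0]
    calc E 0 + ∑ i, c i * Su i * Q i = ∑ i, (Eu i 0 + Ev i 0 + c i * Su i * Q i) := by
          simp only [hE]; rw [← Finset.sum_add_distrib]
      _ ≤ ∑ i, Dc * (Eu i 0 + Ev i 0 + Su i * Q i) := by
          refine Finset.sum_le_sum fun i _ => ?_
          nlinarith [mul_nonneg (sub_nonneg.2 (hcD i)) (mul_nonneg (hSunn i) (hQnn i)),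
            mul_nonneg (sub_nonneg.2 hDc1) (add_nonneg (hEunn i 0) (hEvnn i 0))]
      _ = Dc * ∑ i, (Eu i 0 + Ev i 0 + Su i * Q i) := (Finset.mul_sum _ _ _).symm
  calc ∑ i, (supIcc T (fun t => L2sq (G.len i) (u i t))
        + supIcc T (fun t => L2sq (G.len i) (v i t))
        + beta i * ∫ t in (0:ℝ)..T, L2sq (G.len i) (v i t))
      ≤ ∑ _i : M, (RHS0 + RHS0 + RHS0) := by
        refine Finset.sum_le_sum fun i _ => ?_
        have := hfin1 i; have := hfin2 i; have := hfin3 i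
        linarith
    _ = (Fintype.card M : ℝ) * (3 * RHS0) := by
        rw [Finset.sum_const, Finset.card_univ, nsmul_eq_mul]; ring
    _ ≤ (Fintype.card M : ℝ) * (3 * (Dc * ∑ i, (Eu i 0 + Ev i 0 + Su i * Q i))) := by
        refine mul_le_mul_of_nonneg_left ?_ (Nat.cast_nonneg _)
        linarith
    _ ≤ (3 * (Fintype.card M : ℝ) * Dc + 1) * ∑ i, (Eu i 0 + Ev i 0 + Su i * Q i) := by
        nlinarith [hSignn, hcard]
    _ = (3 * (Fintype.card M : ℝ) * Dc + 1)
        * ∑ i, (L2sq (G.len i) (u i 0) + L2sq (G.len i) (v i 0)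
          + supIcc T (fun t => H1n (G.len i) (u i t))
            * ∫ t in (0:ℝ)..T,
                (L2sq (G.len i) (deriv (φ i t)) + L2sq (G.len i) (v i t))) := by
        rw [eSig]
end
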